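/- arXiv:0806.1503 — 9 statements merged into one kernel-verified Lean document; each statement's English description precedes it below -/
import Mathlib

section
/- Define T(n,k) for integers n ≥ 0, 0 ≤ k ≤ n by T(n,0) = T(n,n) = 1 and T(n,k) = 2·T(n-1,k-1) + T(n-1,k) for 0 < k < n (with T(n,k)=0 outside 0 ≤ k ≤ n). Then for all 0 ≤ k ≤ n, T(n,k) = ∑_{i=n-k}^{n} (-1)^{n-k-i} · 2^{n-i} · C(n,i). -/
/-- Sloane's A119258: `T n 0 = T n n = 1` and `T n k = 2 T (n-1) (k-1) + T (n-1) k`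
for `0 < k < n`, with `T n k = 0` for `k > n`. -/
def T : ℕ → ℕ → ℤ
  | _, 0 => 1
  | 0, _ + 1 => 0
  | n + 1, k + 1 =>
    if n + 1 ≤ k + 1 then (if k + 1 = n + 1 then 1 else 0)
    else 2 * T n k + T n (k + 1)

lemma alt_one (n : ℕ) :
    (1 : ℤ) = ∑ j ∈ Finset.range (n + 1), (-1 : ℤ) ^ (n - j) * 2 ^ j * (n.choose j) := by
  conv_lhs => rw [show (1:ℤ) = ((2:ℤ) - 1) ^ n by norm_num, sub_pow]
  refine Finset.sum_congr rfl fun m hm => ?_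
  rw [Finset.mem_range] at hm
  have : (-1 : ℤ) ^ (m + n) = (-1) ^ (n - m) := by
    rw [show m + n = (n - m) + 2 * m by omega, pow_add]
    simp [pow_mul]
  rw [this]; ring

lemma Trange (n : ℕ) : ∀ k, k ≤ n →
    T n k = ∑ j ∈ Finset.range (k + 1), (-1 : ℤ) ^ (k - j) * 2 ^ j * (n.choose j) := by
  induction n with
  | zero =>
    intro k hk
    interval_cases k
    simp [T]
  | succ n ih =>
    intro k hk
    match k with
    | 0 => simp [T]
    | m + 1 =>
      by_cases hm : m + 1 = n + 1
      · obtain rfl : m = n := by omega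
        show T (m+1) (m+1) = _
        rw [show T (m+1) (m+1) = 1 by simp [T]]
        exact alt_one (m + 1)
      · have hmn : m + 1 < n + 1 := lt_of_le_of_ne hk hm
        have hTe : T (n + 1) (m + 1) = 2 * T n m + T n (m + 1) := by
          rw [T]; simp [Nat.not_le.mpr hmn]
        rw [hTe, ih m (by omega), ih (m + 1) (by omega)]
        rw [Finset.sum_range_succ' (fun j => (-1 : ℤ) ^ (m + 1 - j) * 2 ^ j * ((n+1).choose j)) (m+1)]
        rw [Finset.sum_range_succ' (fun j => (-1 : ℤ) ^ (m + 1 - j) * 2 ^ j * (n.choose j)) (m+1)]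
        rw [Finset.mul_sum]
        have : ∀ j ∈ Finset.range (m + 1),
            (-1 : ℤ) ^ (m + 1 - (j+1)) * 2 ^ (j+1) * ((n+1).choose (j+1)) =
            2 * ((-1 : ℤ) ^ (m - j) * 2 ^ j * (n.choose j)) +
              (-1 : ℤ) ^ (m + 1 - (j+1)) * 2 ^ (j+1) * (n.choose (j+1)) := by
          intro j hj
          rw [Nat.choose_succ_succ]
          push_cast
          ring
        rw [Finset.sum_congr rfl this, Finset.sum_add_distrib]
        simp
        ring

theorem stmt0 (n k : ℕ) (h : k ≤ n) :
    T n k = ∑ i ∈ Finset.Icc (n - k) n,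
      (-1 : ℤ) ^ (i - (n - k)) * 2 ^ (n - i) * (n.choose i) := by
  rw [Trange n k h]
  refine Finset.sum_nbij' (fun j => n - j) (fun i => n - i) ?_ ?_ ?_ ?_ ?_
  · intro j hj; rw [Finset.mem_range] at hj; rw [Finset.mem_Icc]; omega
  · intro i hi; rw [Finset.mem_Icc] at hi; rw [Finset.mem_range]; omega
  · intro j hj; rw [Finset.mem_range] at hj; omega
  · intro i hi; rw [Finset.mem_Icc] at hi; omega
  · intro j hj; rw [Finset.mem_range] at hj
    have h1 : n - j - (n - k) = k - j := by omega
    have h2 : n - (n - j) = j := by omega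
    rw [h1, h2, Nat.choose_symm (by omega)]
end

section
/- Define T(n,k) for integers n ≥ 0, 0 ≤ k ≤ n by T(n,0) = T(n,n) = 1 and T(n,k) = 2·T(n-1,k-1) + T(n-1,k) for 0 < k < n. Then for all 0 ≤ k ≤ n, T(n,k) = ∑_{i=n-k}^{n} C(n,i)·C(i-1, n-k-1), where C(-1,-1) is interpreted as 1. -/
open Finset

/-- Integer binomial coefficient `C a b`, zero for `b < 0` or `b > a`, with the
additional convention `C (-1) (-1) = 1`. -/
def ibc (a b : ℤ) : ℤ :=
  if a = -1 ∧ b = -1 then 1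
  else if 0 ≤ b ∧ b ≤ a then (a.toNat).choose b.toNat else 0

lemma ibc_neg (a b : ℤ) (hb : b < 0) (h : ¬(a = -1 ∧ b = -1)) : ibc a b = 0 := by
  unfold ibc; split_ifs with h1 h2 <;> first | rfl | omega

lemma ibc_big (a b : ℤ) (hb : 0 ≤ b) (h : a < b) : ibc a b = 0 := by
  unfold ibc; split_ifs with h1 h2 <;> first | rfl | omega

lemma ibc_nat (a b : ℕ) (h : b ≤ a) : ibc a b = (a.choose b : ℤ) := by
  unfold ibc
  have h1 : ¬((a:ℤ) = -1 ∧ (b:ℤ) = -1) := by omega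
  have h2 : (0:ℤ) ≤ b ∧ (b:ℤ) ≤ a := by omega
  rw [if_neg h1, if_pos h2]
  simp

lemma ibc_pascal (a b : ℤ) (ha : 0 ≤ a) (hb : 0 ≤ b) :
    ibc a b = ibc (a - 1) (b - 1) + ibc (a - 1) b := by
  rcases le_or_gt b a with hba | hba
  · obtain ⟨p, rfl⟩ := Int.eq_ofNat_of_zero_le ha
    obtain ⟨q, rfl⟩ := Int.eq_ofNat_of_zero_le hb
    have hqp : q ≤ p := by exact_mod_cast hba
    rcases Nat.eq_zero_or_pos q with rfl | hq
    · rcases Nat.eq_zero_or_pos p with rfl | hp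
      · norm_num [ibc]
      · have e1 : ((p:ℤ) - 1) = ((p-1 : ℕ) : ℤ) := by push_cast; omega
        rw [ibc_nat p 0 (by omega), e1]
        rw [show ((0:ℕ):ℤ) - 1 = -1 by norm_num]
        rw [ibc_neg ((p-1:ℕ):ℤ) (-1) (by norm_num) (by rintro ⟨h1, h2⟩; omega)]
        rw [ibc_nat (p-1) 0 (by omega)]
        simp
    · have hp : 0 < p := by omega
      have e1 : ((p:ℤ) - 1) = ((p-1 : ℕ) : ℤ) := by push_cast; omega
      have e2 : ((q:ℤ) - 1) = ((q-1 : ℕ) : ℤ) := by push_cast; omega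
      rw [ibc_nat p q hqp, e1, e2, ibc_nat (p-1) (q-1) (by omega)]
      rcases le_or_gt q (p-1) with h | h
      · rw [ibc_nat (p-1) q h]
        have hpq : p.choose q = (p-1).choose (q-1) + (p-1).choose q := by
          rw [show p = (p-1) + 1 by omega, show q = (q-1) + 1 by omega]
          rw [Nat.choose_succ_succ]
          congr 1 <;> congr 1 <;> omega
        rw [hpq]; push_cast; ring
      · have hq2 : q = p := by omega
        subst hq2
        rw [ibc_big ((q-1:ℕ):ℤ) ((q:ℕ):ℤ) (by positivity) (by push_cast; omega)]
        simp [Nat.choose_self]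
  · rw [ibc_big a b hb hba, ibc_big (a-1) b hb (by omega)]
    rcases lt_or_ge (b-1) 0 with h | h
    · rw [ibc_neg (a-1) (b-1) h (by rintro ⟨h1, h2⟩; omega)]; ring
    · rw [ibc_big (a-1) (b-1) (by omega) (by omega)]; ring

lemma key (m n : ℤ) (hm : 1 ≤ m) (hmn : m ≤ n - 1) :
    (∑ i ∈ Icc m n, ibc n i * ibc (i-1) (m-1))
    = 2 * (∑ i ∈ Icc m (n-1), ibc (n-1) i * ibc (i-1) (m-1))
      + (∑ i ∈ Icc (m-1) (n-1), ibc (n-1) i * ibc (i-1) (m-2)) := by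
  have hsplit : (∑ i ∈ Icc m n, ibc n i * ibc (i-1) (m-1))
      = (∑ i ∈ Icc m n, ibc (n-1) i * ibc (i-1) (m-1))
        + (∑ i ∈ Icc m n, ibc (n-1) (i-1) * ibc (i-1) (m-1)) := by
    rw [← Finset.sum_add_distrib]
    apply Finset.sum_congr rfl
    intro i hi
    simp only [Finset.mem_Icc] at hi
    rw [ibc_pascal n i (by omega) (by omega)]
    ring
  -- A part
  have hA : (∑ i ∈ Icc m n, ibc (n-1) i * ibc (i-1) (m-1))
      = (∑ i ∈ Icc m (n-1), ibc (n-1) i * ibc (i-1) (m-1)) := by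
    have hins : Icc m n = insert n (Icc m (n-1)) := by
      ext x; simp only [Finset.mem_Icc, Finset.mem_insert]; omega
    rw [hins, Finset.sum_insert (by simp only [Finset.mem_Icc]; omega)]
    rw [ibc_big (n-1) n (by omega) (by omega)]
    ring
  -- B part : reindex
  have hB : (∑ i ∈ Icc m n, ibc (n-1) (i-1) * ibc (i-1) (m-1))
      = (∑ i ∈ Icc (m-1) (n-1), ibc (n-1) i * ibc i (m-1)) := by
    have himg : Icc m n = Finset.image (· + 1) (Icc (m-1) (n-1)) := by
      ext x
      simp only [Finset.mem_Icc, Finset.mem_image]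
      constructor
      · intro hx; exact ⟨x - 1, by omega, by omega⟩
      · rintro ⟨y, hy, rfl⟩; omega
    rw [himg, Finset.sum_image (by intro x _ y _ h; have h' : x + 1 = y + 1 := h; omega)]
    apply Finset.sum_congr rfl
    intro i _
    norm_num
  -- Pascal on second factor in B
  have hB2 : (∑ i ∈ Icc (m-1) (n-1), ibc (n-1) i * ibc i (m-1))
      = (∑ i ∈ Icc (m-1) (n-1), ibc (n-1) i * ibc (i-1) (m-2))
        + (∑ i ∈ Icc (m-1) (n-1), ibc (n-1) i * ibc (i-1) (m-1)) := by
    rw [← Finset.sum_add_distrib]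
    apply Finset.sum_congr rfl
    intro i hi
    simp only [Finset.mem_Icc] at hi
    rw [ibc_pascal i (m-1) (by omega) (by omega)]
    ring
  have hA' : (∑ i ∈ Icc (m-1) (n-1), ibc (n-1) i * ibc (i-1) (m-1))
      = (∑ i ∈ Icc m (n-1), ibc (n-1) i * ibc (i-1) (m-1)) := by
    have hins : Icc (m-1) (n-1) = insert (m-1) (Icc m (n-1)) := by
      ext x; simp only [Finset.mem_Icc, Finset.mem_insert]; omega
    rw [hins, Finset.sum_insert (by simp only [Finset.mem_Icc]; omega)]
    rw [ibc_big (m-1-1) (m-1) (by omega) (by omega)]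
    ring
  rw [hsplit, hA, hB, hB2, hA']
  ring

lemma ibc_self_nat (a : ℤ) (ha : 0 ≤ a) : ibc a a = 1 := by
  obtain ⟨p, rfl⟩ := Int.eq_ofNat_of_zero_le ha
  rw [ibc_nat p p le_rfl, Nat.choose_self]; norm_num

theorem stmt1 (n k : ℕ) (h : k ≤ n) :
    T n k = ∑ i ∈ Finset.Icc ((n : ℤ) - k) (n : ℤ), ibc n i * ibc (i - 1) ((n : ℤ) - k - 1) := by
  induction n generalizing k with
  | zero =>
    interval_cases k
    norm_num [T, ibc]
  | succ n ih =>
    rcases Nat.eq_zero_or_pos k with rfl | hk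
    · -- k = 0
      norm_num [T]
      rw [ibc_self_nat ((n:ℤ)+1) (by positivity), ibc_self_nat (n:ℤ) (by positivity)]
      norm_num
    rcases eq_or_lt_of_le h with rfl | hlt
    · -- k = n + 1
      have hT : T (n+1) (n+1) = 1 := by simp [T]
      rw [hT]
      rw [show (((n+1:ℕ):ℤ) - ((n+1:ℕ):ℤ)) = 0 by ring]
      rw [Finset.sum_eq_single 0]
      · have h1 : ibc ((n+1:ℕ):ℤ) (0:ℤ) = 1 := by
          rw [show ((0:ℤ)) = ((0:ℕ):ℤ) by norm_num, ibc_nat (n+1) 0 (by omega)]; simp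
        have h2 : ibc ((0:ℤ)-1) ((0:ℤ)-1) = 1 := by norm_num [ibc]
        rw [h1, h2]; norm_num
      · intro b hb hb0
        simp only [Finset.mem_Icc] at hb
        rw [ibc_neg (b-1) (0-1) (by omega) (by rintro ⟨h1,h2⟩; omega)]
        ring
      · intro h0
        simp only [Finset.mem_Icc] at h0
        omega
    · -- 0 < k < n+1  i.e. k ≤ n
      obtain ⟨j, rfl⟩ : ∃ j, k = j + 1 := ⟨k - 1, by omega⟩
      have hjn : j + 1 ≤ n := by omega
      have hT : T (n+1) (j+1) = 2 * T n j + T n (j+1) := by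
        have : ¬ (n + 1 ≤ j + 1) := by omega
        simp [T, this]
      rw [hT, ih j (by omega), ih (j+1) (by omega)]
      have hkey := key ((n:ℤ) - j) ((n:ℤ) + 1) (by omega) (by push_cast; omega)
      have e0 : ((n+1:ℕ):ℤ) - ((j+1:ℕ):ℤ) = (n:ℤ) - j := by push_cast; try ring
      have e1 : ((n+1:ℕ):ℤ) = (n:ℤ) + 1 := by push_cast; try ring
      rw [e0, e1]
      rw [show (n:ℤ) - j - 1 = (n:ℤ) - (j+1:ℕ) by push_cast; try ring] at hkey ⊢
      rw [show (n:ℤ) + 1 - 1 = (n:ℤ) by ring] at hkey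
      rw [show (n:ℤ) - j - 2 = (n:ℤ) - (j+1:ℕ) - 1 by push_cast; try ring] at hkey
      rw [show (n:ℤ) - j = (n:ℤ) - (j:ℕ) by norm_num] at hkey
      rw [hkey]
end

section
/- Define T(n,k) by the recurrence T(n,0)=T(n,n)=1 and T(n,k)=2T(n-1,k-1)+T(n-1,k) for 0<k<n. Then for every fixed k ≥ 0, the generating function ∑_{n=0}^∞ T(n,n-k) x^n equals x^k / ((1-2x)^k (1-x)) as a formal power series. -/
lemma T_zero (n : ℕ) : T n 0 = 1 := by cases n <;> rfl

lemma T_rec (n k : ℕ) (h : k + 1 < n + 1) :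
    T (n+1) (k+1) = 2 * T n k + T n (k+1) := by
  simp [T, Nat.not_le.mpr h]

open PowerSeries

lemma key_s2 (k : ℕ) :
    (PowerSeries.mk fun n => if n < k+1 then (0:ℚ) else (T n (n-(k+1)) : ℚ)) * (1 - 2*X)
      = X * (PowerSeries.mk fun n => if n < k then (0:ℚ) else (T n (n-k) : ℚ)) := by
  ext n
  rcases n with _ | n
  · simp
  · rw [mul_sub, mul_one, map_sub, show (2:PowerSeries ℚ)*X = X * PowerSeries.C (2:ℚ) by
        rw [mul_comm, map_ofNat],
      ← mul_assoc, PowerSeries.coeff_mul_C, coeff_succ_mul_X, coeff_succ_X_mul]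
    simp only [coeff_mk]
    rcases lt_trichotomy n k with h | rfl | h
    · simp [Nat.lt_succ_of_lt h, h]
    · have : ¬ (n+1 < n+1) := lt_irrefl _
      simp [this, T_zero]
    · have h1 : ¬ (n+1 < k+1) := by omega
      have h2 : ¬ (n < k+1) := by omega
      have h3 : ¬ (n < k) := by omega
      simp only [h1, h2, h3, if_false]
      have e : n + 1 - (k+1) = (n - (k+1)) + 1 := by omega
      rw [e, T_rec n (n-(k+1)) (by omega)]
      have e2 : n - (k+1) + 1 = n - k := by omega
      rw [e2]
      push_cast
      ring

lemma T_diag (n : ℕ) : T n n = 1 := by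
  cases n <;> simp [T]

open PowerSeries in
/-- For fixed `k`, the generating function `∑ₙ T(n, n-k) xⁿ` equals
`x^k / ((1-2x)^k (1-x))` as a formal power series (the denominator has constant
term 1, so this is equivalent to the product form below). -/
theorem stmt2 (k : ℕ) :
    (PowerSeries.mk fun n => if n < k then (0 : ℚ) else (T n (n - k) : ℚ)) *
      ((1 - 2 * (X : PowerSeries ℚ)) ^ k * (1 - X)) = X ^ k := by
  induction k with
  | zero =>
    simp only [pow_zero, one_mul]
    ext n
    rcases n with _ | n
    · simp [T_zero]
    · rw [mul_sub, mul_one, map_sub, coeff_succ_mul_X]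
      simp [T_diag]
  | succ k ih =>
    calc (PowerSeries.mk fun n => if n < k+1 then (0 : ℚ) else (T n (n - (k+1)) : ℚ)) *
          ((1 - 2 * X) ^ (k+1) * (1 - X))
        = ((PowerSeries.mk fun n => if n < k+1 then (0:ℚ) else (T n (n-(k+1)) : ℚ)) * (1 - 2*X)) *
          ((1 - 2*X)^k * (1 - X)) := by ring
      _ = X * ((PowerSeries.mk fun n => if n < k then (0:ℚ) else (T n (n-k) : ℚ)) *
          ((1 - 2*X)^k * (1 - X))) := by rw [key_s2]; ring
      _ = X ^ (k+1) := by rw [ih]; ring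
end

section
/- For 3 ≤ k ≤ n, the alternating sum ∑_{i=k}^{n} (-1)^{k+i} 2^{n-i} C(n,i) equals T(n, n-k), where T is defined by the recurrence T(n,0)=T(n,n)=1 and T(n,k)=2T(n-1,k-1)+T(n-1,k) for 0<k<n. -/
open Finset

def S (n k : ℕ) : ℤ := ∑ i ∈ Icc k n, (-1 : ℤ) ^ (k + i) * 2 ^ (n - i) * (n.choose i)

lemma S_zero (n : ℕ) : S n 0 = 1 := by
  have h := add_pow (-1 : ℤ) 2 n
  norm_num at h
  have e : Finset.Icc 0 n = Finset.range (n + 1) := by ext x; simp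
  simp only [S, e, zero_add]
  rw [← h]

lemma S_top (n : ℕ) : S n n = 1 := by
  simp [S, ← two_mul, Finset.Icc_self]

lemma shift (a b : ℕ) (f : ℕ → ℤ) :
    ∑ i ∈ Icc (a + 1) (b + 1), f i = ∑ j ∈ Icc a b, f (j + 1) := by
  have h := Finset.sum_map (Icc a b) (addRightEmbedding 1) f
  rw [Finset.map_add_right_Icc] at h
  simpa using h

lemma S_rec (n m : ℕ) (h : m + 1 ≤ n) :
    S (n + 1) (m + 1) = 2 * S n (m + 1) + S n m := by
  have hn : 1 ≤ n := le_trans (Nat.le_add_left 1 m) h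
  unfold S
  rw [shift m n]
  have step : ∀ j ∈ Icc m n,
      (-1 : ℤ) ^ (m + 1 + (j + 1)) * 2 ^ (n + 1 - (j + 1)) * ((n + 1).choose (j + 1))
      = (-1 : ℤ) ^ (m + j) * 2 ^ (n - j) * (n.choose j)
        + (-1 : ℤ) ^ (m + j) * 2 ^ (n - j) * (n.choose (j + 1)) := by
    intro j hj
    rw [Nat.choose_succ_succ]
    have e1 : m + 1 + (j + 1) = (m + j) + 2 := by omega
    have e2 : n + 1 - (j + 1) = n - j := by omega
    rw [e1, e2, pow_add]
    push_cast
    ring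
  rw [Finset.sum_congr rfl step, Finset.sum_add_distrib]
  have hB : ∑ j ∈ Icc m n, (-1 : ℤ) ^ (m + j) * 2 ^ (n - j) * (n.choose (j + 1))
      = 2 * ∑ i ∈ Icc (m + 1) n, (-1 : ℤ) ^ (m + 1 + i) * 2 ^ (n - i) * (n.choose i) := by
    obtain ⟨p, rfl⟩ : ∃ p, n = p + 1 := ⟨n - 1, by omega⟩
    rw [shift m p]
    rw [Finset.sum_Icc_succ_top (by omega : m ≤ p + 1)]
    rw [Nat.choose_succ_self]
    rw [Finset.mul_sum]
    simp only [Nat.cast_zero, mul_zero, add_zero]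
    apply Finset.sum_congr rfl
    intro j hj
    simp only [Finset.mem_Icc] at hj
    have e1 : m + 1 + (j + 1) = (m + j) + 2 := by omega
    have e2 : p + 1 - j = (p + 1 - (j + 1)) + 1 := by omega
    rw [e1, e2, pow_add, pow_succ]
    ring
  rw [hB]
  ring

lemma key_s6 : ∀ n k, k ≤ n → S n k = T n (n - k) := by
  intro n
  induction n with
  | zero =>
    intro k hk
    interval_cases k
    simp [S_zero, T]
  | succ n ih =>
    intro k hk
    rcases Nat.eq_zero_or_pos k with rfl | hk0
    · rw [S_zero]
      simp [T]
    · obtain ⟨m, rfl⟩ : ∃ m, k = m + 1 := ⟨k - 1, by omega⟩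
      rcases eq_or_lt_of_le hk with heq | hlt
      · rw [heq, S_top]
        simp [T]
      · have hmn : m + 1 ≤ n := by omega
        rw [S_rec n m hmn]
        have e : n + 1 - (m + 1) = (n - (m + 1)) + 1 := by omega
        rw [e]
        show _ = T (n + 1) _
        rw [T]
        rw [if_neg (by omega)]
        have e2 : n - (m + 1) + 1 = n - m := by omega
        rw [ih (m + 1) hmn, ih m (by omega), e2]

theorem stmt6 (n k : ℕ) (h3 : 3 ≤ k) (hkn : k ≤ n) :
    ∑ i ∈ Finset.Icc k n, (-1 : ℤ) ^ (k + i) * 2 ^ (n - i) * (n.choose i) = T n (n - k) := by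
  exact key_s6 n k hkn
end

section
/- Let n ≥ 4, v' ∈ Ψ⁻_n, S ⊆ {1,…,n}, and suppose |K(v',S)| ≥ 3, where K(v',S) = {v ∈ Ψ⁺_n : v differs from v' in exactly one coordinate, which lies in S}. Then v' and S are uniquely determined by the set K(v',S): if K(v',S) = K(u',S') with |S|,|S'| ≥ 3 then v' = u' and S = S'. -/
/-- The vertex set of the hypercube: vectors with all coordinates `±1`. -/
def PsiSet (n : ℕ) : Set (Fin n → ℤ) := {v | ∀ i, v i = 1 ∨ v i = -1}

/-- The number of coordinates equal to `-1`. -/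
def negCount {n : ℕ} (v : Fin n → ℤ) : ℕ := (Finset.univ.filter fun i => v i = -1).card

/-- `Ψ⁺ₙ`: `±1`-vectors with an even number of `-1` coordinates. -/
def PsiPlus (n : ℕ) : Set (Fin n → ℤ) := {v | v ∈ PsiSet n ∧ Even (negCount v)}

/-- `Ψ⁻ₙ`: `±1`-vectors with an odd number of `-1` coordinates. -/
def PsiMinus (n : ℕ) : Set (Fin n → ℤ) := {v | v ∈ PsiSet n ∧ ¬ Even (negCount v)}

/-- Hamming distance: the number of coordinates at which `x` and `y` differ. -/
def hamming {n : ℕ} (x y : Fin n → ℤ) : ℕ := (Finset.univ.filter fun i => x i ≠ y i).card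

/-- `K(v', S)`: the set of vertices of `Ψ⁺ₙ` differing from `v'` in exactly one
coordinate, that coordinate lying in `S`. -/
def Kset {n : ℕ} (v' : Fin n → ℤ) (S : Finset (Fin n)) : Set (Fin n → ℤ) :=
  {w | w ∈ PsiPlus n ∧ ∃ i ∈ S, w i ≠ v' i ∧ ∀ j, j ≠ i → w j = v' j}

/-- `L(v, S)`: the set of vertices of `Ψ⁺ₙ` agreeing with `v` at all coordinates
outside `S`. -/
def Lset {n : ℕ} (v : Fin n → ℤ) (S : Finset (Fin n)) : Set (Fin n → ℤ) :=
  {w | w ∈ PsiPlus n ∧ ∀ i, i ∉ S → w i = v i}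

/-- Flip coordinate `i` of `v`. -/
def pflip {n : ℕ} (v : Fin n → ℤ) (i : Fin n) : Fin n → ℤ := Function.update v i (-(v i))

lemma negCount_flip {n : ℕ} (v : Fin n → ℤ) (hv : v ∈ PsiSet n) (i : Fin n) :
    Even (negCount (pflip v i)) ↔ ¬ Even (negCount v) := by
  unfold negCount
  rcases hv i with h1 | h1
  · have heq : (Finset.univ.filter fun j => pflip v i j = -1)
        = insert i (Finset.univ.filter fun j => v j = -1) := by
      ext j
      rcases eq_or_ne j i with rfl | hji
      · simp [pflip, h1]
      · rw [Finset.mem_filter]; simp [pflip, Function.update_of_ne hji, hji]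
    rw [heq, Finset.card_insert_of_notMem (by simp [h1])]
    simp [Nat.even_add_one]
  · have heq : (Finset.univ.filter fun j => pflip v i j = -1)
        = (Finset.univ.filter fun j => v j = -1).erase i := by
      ext j
      rcases eq_or_ne j i with rfl | hji
      · simp [pflip, h1]
      · rw [Finset.mem_filter]; simp [pflip, Function.update_of_ne hji, hji]
    have hi : i ∈ Finset.univ.filter fun j => v j = -1 := by simp [h1]
    rw [heq, Finset.card_erase_of_mem hi]
    rw [Nat.even_sub (Finset.card_pos.mpr ⟨i, hi⟩)]
    simp [Nat.even_iff]

lemma mem_Kset {n : ℕ} {v' : Fin n → ℤ} (hv' : v' ∈ PsiMinus n) {S : Finset (Fin n)}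
    {w : Fin n → ℤ} : w ∈ Kset v' S ↔ ∃ i ∈ S, w = pflip v' i := by
  constructor
  · rintro ⟨⟨hwP, _⟩, i, hiS, hne, heq⟩
    refine ⟨i, hiS, funext fun j => ?_⟩
    rcases eq_or_ne j i with rfl | hji
    · rw [pflip, Function.update_self]
      rcases hwP j with h | h <;> rcases hv'.1 j with h' | h' <;> simp_all
    · rw [pflip, Function.update_of_ne hji]; exact heq j hji
  · rintro ⟨i, hiS, rfl⟩
    refine ⟨⟨fun j => ?_, (negCount_flip v' hv'.1 i).mpr hv'.2⟩, i, hiS, ?_,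
      fun j hj => Function.update_of_ne hj _ _⟩
    · rcases eq_or_ne j i with rfl | hji
      · rw [pflip, Function.update_self]
        rcases hv'.1 j with h | h <;> simp [h]
      · rw [pflip, Function.update_of_ne hji]; exact hv'.1 j
    · rw [pflip, Function.update_self]
      rcases hv'.1 i with h | h <;> rw [h] <;> norm_num

lemma flip_inj {n : ℕ} {v : Fin n → ℤ} (hv : v ∈ PsiSet n) {i j : Fin n}
    (h : pflip v i = pflip v j) : i = j := by
  by_contra hij
  have h1 := congrFun h i
  rw [pflip, pflip, Function.update_self, Function.update_of_ne hij] at h1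
  rcases hv i with h' | h' <;> rw [h'] at h1 <;> norm_num at h1

theorem stmt10 (n : ℕ) (hn : 4 ≤ n) (v' u' : Fin n → ℤ)
    (hv' : v' ∈ PsiMinus n) (hu' : u' ∈ PsiMinus n)
    (S S' : Finset (Fin n)) (hS : 3 ≤ S.card) (hS' : 3 ≤ S'.card)
    (h : Kset v' S = Kset u' S') : v' = u' ∧ S = S' := by
  obtain ⟨a, b, c, ha, hb, hc, hab, hac, hbc⟩ := Finset.two_lt_card_iff.mp (by omega : 2 < S.card)
  have mema : pflip v' a ∈ Kset u' S' := by
    rw [← h]; exact (mem_Kset hv').mpr ⟨a, ha, rfl⟩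
  have memb : pflip v' b ∈ Kset u' S' := by
    rw [← h]; exact (mem_Kset hv').mpr ⟨b, hb, rfl⟩
  have memc : pflip v' c ∈ Kset u' S' := by
    rw [← h]; exact (mem_Kset hv').mpr ⟨c, hc, rfl⟩
  obtain ⟨a', ha', ea⟩ := (mem_Kset hu').mp mema
  obtain ⟨b', hb', eb⟩ := (mem_Kset hu').mp memb
  obtain ⟨c', hc', ec⟩ := (mem_Kset hu').mp memc
  have hvu : v' = u' := by
    funext j
    by_contra hj
    have step : ∀ x x', pflip v' x = pflip u' x' → j = x ∨ j = x' := by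
      intro x x' hxx
      by_contra hcon
      push_neg at hcon
      have := congrFun hxx j
      rw [pflip, pflip, Function.update_of_ne hcon.1, Function.update_of_ne hcon.2] at this
      exact hj this
    have hab' : a' ≠ b' := fun hh => hab (flip_inj hv'.1 (by rw [ea, eb, hh]))
    have hac' : a' ≠ c' := fun hh => hac (flip_inj hv'.1 (by rw [ea, ec, hh]))
    have hbc' : b' ≠ c' := fun hh => hbc (flip_inj hv'.1 (by rw [eb, ec, hh]))
    rcases step a a' ea with h1 | h1 <;> rcases step b b' eb with h2 | h2 <;>
      rcases step c c' ec with h3 | h3 <;> subst h1 <;> simp_all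
  subst hvu
  refine ⟨rfl, ?_⟩
  ext i
  constructor
  · intro hi
    have : pflip v' i ∈ Kset v' S' := by
      rw [← h]; exact (mem_Kset hv').mpr ⟨i, hi, rfl⟩
    obtain ⟨i', hi', he⟩ := (mem_Kset hv').mp this
    exact (flip_inj hv'.1 he) ▸ hi'
  · intro hi
    have : pflip v' i ∈ Kset v' S := by
      rw [h]; exact (mem_Kset hv').mpr ⟨i, hi, rfl⟩
    obtain ⟨i', hi', he⟩ := (mem_Kset hv').mp this
    exact (flip_inj hv'.1 he) ▸ hi'
end

section
/- For n ≥ 4, every clique of the half cube graph ½H_n is of the form K(v',S) for some v' ∈ Ψ⁻_n and S ⊆ {1,…,n}, or of the form L(v,S) for some v ∈ Ψ⁺_n and S ⊆ {1,…,n} with |S| = 3. -/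
open scoped symmDiff

section infra
variable {n : ℕ}

def flip2 (x : Fin n → ℤ) (S : Finset (Fin n)) : Fin n → ℤ := fun i => if i ∈ S then -x i else x i

def Dset (x y : Fin n → ℤ) : Finset (Fin n) := Finset.univ.filter fun i => x i ≠ y i

lemma pm_neg {a b : ℤ} (ha : a = 1 ∨ a = -1) (hb : b = 1 ∨ b = -1) (h : a ≠ b) : b = -a := by
  rcases ha with rfl | rfl <;> rcases hb with rfl | rfl <;> simp_all

lemma flip2_psiSet {x : Fin n → ℤ} (hx : x ∈ PsiSet n) (S : Finset (Fin n)) :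
    flip2 x S ∈ PsiSet n := by
  intro i
  by_cases hi : i ∈ S <;> rcases hx i with h | h <;> simp [flip2, hi, h]

lemma dset_flip2 {x : Fin n → ℤ} (hx : x ∈ PsiSet n) (S : Finset (Fin n)) :
    Dset x (flip2 x S) = S := by
  ext i
  rcases hx i with h | h <;> by_cases hi : i ∈ S <;>
    simp [Dset, flip2, hi, h]

lemma flip2_eq {x y : Fin n → ℤ} (hx : x ∈ PsiSet n) (hy : y ∈ PsiSet n) :
    flip2 x (Dset x y) = y := by
  funext i
  by_cases hi : x i = y i
  · simp [flip2, Dset, hi]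
  · simp only [flip2, Dset, Finset.mem_filter, Finset.mem_univ, true_and, if_pos hi]
    exact (pm_neg (hx i) (hy i) hi).symm

lemma dset_inj {x y z : Fin n → ℤ} (hx : x ∈ PsiSet n) (hy : y ∈ PsiSet n)
    (hz : z ∈ PsiSet n) (h : Dset x y = Dset x z) : y = z := by
  rw [← flip2_eq hx hy, h, flip2_eq hx hz]

lemma dset_card_cast {x y : Fin n → ℤ} (hx : x ∈ PsiSet n) (hy : y ∈ PsiSet n) :
    ((Dset x y).card : ZMod 2) = (negCount x : ZMod 2) + negCount y := by
  simp only [Dset, negCount, Finset.card_filter]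
  push_cast
  rw [← Finset.sum_add_distrib]
  apply Finset.sum_congr rfl
  intro i _
  rcases hx i with h | h <;> rcases hy i with h' | h' <;> simp [h, h'] <;> decide

lemma even_iff_zmod {m : ℕ} : Even m ↔ (m : ZMod 2) = 0 := by
  rw [even_iff_two_dvd, ← ZMod.natCast_eq_zero_iff]

lemma dset_symmDiff {x y z : Fin n → ℤ} (hx : x ∈ PsiSet n) (hy : y ∈ PsiSet n)
    (hz : z ∈ PsiSet n) : Dset y z = Dset x y ∆ Dset x z := by
  ext i
  simp only [Finset.mem_symmDiff, Dset, Finset.mem_filter, Finset.mem_univ, true_and]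
  rcases hx i with h | h <;> rcases hy i with h' | h' <;> rcases hz i with h'' | h'' <;>
    simp [h, h', h'']

lemma card_symmDiff' (s t : Finset (Fin n)) :
    (s ∆ t).card + 2 * (s ∩ t).card = s.card + t.card := by
  rw [symmDiff_eq_sup_sdiff_inf]
  have h1 : (s ∩ t) ⊆ (s ∪ t) := (Finset.inter_subset_left).trans Finset.subset_union_left
  have h2 := Finset.card_sdiff_of_subset h1
  have h3 := Finset.card_union_add_card_inter s t
  have h4 := Finset.card_le_card h1
  simp only [Finset.sup_eq_union, Finset.inf_eq_inter]
  omega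

lemma pair_xor {T : Finset (Fin n)} {a b : Fin n} (hab : a ≠ b)
    (h : (T ∩ {a, b}).card = 1) : (a ∈ T ∧ b ∉ T) ∨ (a ∉ T ∧ b ∈ T) := by
  by_cases ha : a ∈ T <;> by_cases hb : b ∈ T
  · exfalso
    have hsub : ({a, b} : Finset (Fin n)) ⊆ T ∩ {a, b} := by
      intro i hi; simp at hi; rcases hi with rfl | rfl <;> simp [ha, hb]
    have := Finset.card_le_card hsub
    rw [Finset.card_pair hab] at this
    omega
  · exact Or.inl ⟨ha, hb⟩
  · exact Or.inr ⟨ha, hb⟩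
  · exfalso
    have he : T ∩ {a, b} = ∅ := by
      ext i; simp only [Finset.mem_inter, Finset.mem_insert, Finset.mem_singleton,
        Finset.notMem_empty, iff_false, not_and]
      rintro hi (rfl | rfl) <;> tauto
    rw [he] at h; simp at h

lemma flip2_flip2_self (x : Fin n → ℤ) (S : Finset (Fin n)) :
    flip2 (flip2 x S) S = x := by
  funext k; by_cases hk : k ∈ S <;> simp [flip2, hk]

lemma flip2_pair (x : Fin n → ℤ) {i j : Fin n} (h : i ≠ j) :
    flip2 (flip2 x {j}) {i} = flip2 x {j, i} := by
  funext k
  by_cases hki : k = i <;> by_cases hkj : k = j <;>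
    simp [flip2, hki, hkj, h] <;> tauto

end infra

set_option maxHeartbeats 1000000 in
theorem stmt13 (n : ℕ) (hn : 4 ≤ n) (C : Set (Fin n → ℤ)) (hC : C ⊆ PsiPlus n)
    (hclique : ∀ x ∈ C, ∀ y ∈ C, x ≠ y → hamming x y = 2) :
    (∃ v' ∈ PsiMinus n, ∃ S : Finset (Fin n), C = Kset v' S) ∨
    (∃ v ∈ PsiPlus n, ∃ S : Finset (Fin n), S.card = 3 ∧ C = Lset v S) := by
  classical
  have h0 : (0 : ℕ) < n := by omega
  rcases Set.eq_empty_or_nonempty C with hCe | ⟨x, hx⟩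
  · left
    have hps : (fun _ : Fin n => (1:ℤ)) ∈ PsiSet n := fun i => Or.inl rfl
    refine ⟨flip2 (fun _ => 1) {⟨0, h0⟩}, ⟨flip2_psiSet hps _, ?_⟩, ∅, ?_⟩
    · have h1 := dset_card_cast hps (flip2_psiSet hps {⟨0, h0⟩})
      rw [dset_flip2 hps] at h1
      have h2 : negCount (fun _ : Fin n => (1:ℤ)) = 0 := by simp [negCount]
      intro hev
      rw [even_iff_zmod] at hev
      rw [hev, h2, Finset.card_singleton] at h1
      simp at h1
    · rw [hCe]; ext w; simp [Kset]
  · have hxps : x ∈ PsiSet n := (hC hx).1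
    have hxev : Even (negCount x) := (hC hx).2
    have hwps : ∀ w ∈ C, w ∈ PsiSet n := fun w hw => (hC hw).1
    have hcard2 : ∀ c ∈ C, c ≠ x → (Dset x c).card = 2 := by
      intro c hc hcx
      exact hclique x hx c hc (Ne.symm hcx)
    have hinter : ∀ c ∈ C, ∀ c' ∈ C, c ≠ x → c' ≠ x → c ≠ c' →
        (Dset x c ∩ Dset x c').card = 1 := by
      intro c hc c' hc' hcx hc'x hcc'
      have h1 : (Dset c c').card = 2 := hclique c hc c' hc' hcc'
      rw [dset_symmDiff hxps (hwps c hc) (hwps c' hc')] at h1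
      have h2 := card_symmDiff' (Dset x c) (Dset x c')
      have h3 := hcard2 c hc hcx
      have h4 := hcard2 c' hc' hc'x
      omega
    -- helper to extract common element
    have hcommon : ∀ c ∈ C, ∀ c' ∈ C, c ≠ x → c' ≠ x → c ≠ c' →
        ∃ e, e ∈ Dset x c ∧ e ∈ Dset x c' := by
      intro c hc c' hc' hcx hc'x hcc'
      have h1 := hinter c hc c' hc' hcx hc'x hcc'
      obtain ⟨e, he⟩ := Finset.card_eq_one.mp h1
      refine ⟨e, ?_⟩
      rw [← Finset.mem_inter, he]; simp
    by_cases hstar : ∃ j, ∀ c ∈ C, c ≠ x → j ∈ Dset x c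
    · obtain ⟨j, hj⟩ := hstar
      left
      have hv'ps : flip2 x {j} ∈ PsiSet n := flip2_psiSet hxps _
      have hv'odd : ¬ Even (negCount (flip2 x {j})) := by
        have h1 := dset_card_cast hxps hv'ps
        rw [dset_flip2 hxps, Finset.card_singleton] at h1
        intro hev
        rw [even_iff_zmod] at hev
        rw [hev, even_iff_zmod.mp hxev] at h1
        simp at h1
      refine ⟨flip2 x {j}, ⟨hv'ps, hv'odd⟩,
        insert j (Finset.univ.filter fun t => t ≠ j ∧ flip2 x {j, t} ∈ C), ?_⟩
      ext w
      simp only [Kset, Set.mem_setOf_eq]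
      constructor
      · intro hwC
        refine ⟨hC hwC, ?_⟩
        by_cases hwx : w = x
        · refine ⟨j, Finset.mem_insert_self _ _, ?_, ?_⟩
          · subst hwx; simp only [flip2, Finset.mem_singleton, if_pos rfl]
            rcases hxps j with h | h <;> rw [h] <;> norm_num
          · intro k hk; subst hwx; simp [flip2, hk]
        · have hjw := hj w hwC hwx
          have h2 := hcard2 w hwC hwx
          obtain ⟨a, b, hab, hD⟩ := Finset.card_eq_two.mp h2
          have hj' : j = a ∨ j = b := by rw [hD] at hjw; simpa using hjw
          obtain ⟨t, htj, hDt⟩ : ∃ t, t ≠ j ∧ Dset x w = {j, t} := by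
            rcases hj' with rfl | rfl
            · exact ⟨b, fun h => hab h.symm, hD⟩
            · exact ⟨a, fun h => hab h, by rw [hD, Finset.pair_comm]⟩
          have hwf : w = flip2 x {j, t} := by
            rw [← hDt, flip2_eq hxps (hwps w hwC)]
          refine ⟨t, ?_, ?_, ?_⟩
          · refine Finset.mem_insert_of_mem ?_
            simp only [Finset.mem_filter, Finset.mem_univ, true_and]
            exact ⟨htj, hwf ▸ hwC⟩
          · rw [hwf]
            simp only [flip2, Finset.mem_insert, Finset.mem_singleton, htj,
              if_neg (fun h : t = j => htj h), if_pos (Or.inr rfl)]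
            rcases hxps t with h | h <;> rw [h] <;> norm_num
          · intro k hk
            rw [hwf]
            by_cases hkj : k = j <;> simp [flip2, hkj, hk]
      · rintro ⟨hwp, i, hiS, hne, hag⟩
        have hwps' : w ∈ PsiSet n := hwp.1
        have hDv : Dset (flip2 x {j}) w = {i} := by
          ext k
          simp only [Dset, Finset.mem_filter, Finset.mem_univ, true_and,
            Finset.mem_singleton]
          constructor
          · intro hne'; by_contra hk; exact hne' (hag k hk).symm
          · rintro rfl; exact fun h => hne h.symm
        have hwf : w = flip2 (flip2 x {j}) {i} := by
          rw [← hDv, flip2_eq hv'ps hwps']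
        simp only [Finset.mem_insert, Finset.mem_filter, Finset.mem_univ, true_and] at hiS
        rcases hiS with rfl | ⟨hij, hmem⟩
        · rw [hwf, flip2_flip2_self]; exact hx
        · rw [hwf, flip2_pair x hij]; exact hmem
    · push_neg at hstar
      obtain ⟨c1, hc1C, hc1x, _⟩ := hstar ⟨0, h0⟩
      obtain ⟨a, b, hab, hD1⟩ := Finset.card_eq_two.mp (hcard2 c1 hc1C hc1x)
      obtain ⟨c2, hc2C, hc2x, ha2⟩ := hstar a
      have hc12 : c1 ≠ c2 := by rintro rfl; apply ha2; rw [hD1]; simp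
      have hbin2 : b ∈ Dset x c2 := by
        obtain ⟨e, he1, he2⟩ := hcommon c1 hc1C c2 hc2C hc1x hc2x hc12
        have : e = a ∨ e = b := by rw [hD1] at he1; simpa using he1
        rcases this with rfl | rfl
        · exact absurd he2 ha2
        · exact he2
      obtain ⟨c, hca, hcb, hD2⟩ : ∃ c, c ≠ a ∧ c ≠ b ∧ Dset x c2 = {b, c} := by
        obtain ⟨p, q, hpq, hD2⟩ := Finset.card_eq_two.mp (hcard2 c2 hc2C hc2x)
        have hb' : b = p ∨ b = q := by rw [hD2] at hbin2; simpa using hbin2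
        rcases hb' with rfl | rfl
        · refine ⟨q, ?_, Ne.symm hpq, hD2⟩
          intro h; apply ha2; rw [hD2, ← h]; simp
        · refine ⟨p, ?_, fun h => hpq h, by rw [hD2, Finset.pair_comm]⟩
          intro h; apply ha2; rw [hD2, ← h]; simp
      obtain ⟨c3, hc3C, hc3x, hb3⟩ := hstar b
      have hc13 : c1 ≠ c3 := by rintro rfl; apply hb3; rw [hD1]; simp
      have hc23 : c2 ≠ c3 := by rintro rfl; apply hb3; rw [hD2]; simp
      have ha3 : a ∈ Dset x c3 := by
        obtain ⟨e, he1, he2⟩ := hcommon c1 hc1C c3 hc3C hc1x hc3x hc13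
        have : e = a ∨ e = b := by rw [hD1] at he1; simpa using he1
        rcases this with rfl | rfl
        · exact he2
        · exact absurd he2 hb3
      have hcin3 : c ∈ Dset x c3 := by
        obtain ⟨e, he1, he2⟩ := hcommon c2 hc2C c3 hc3C hc2x hc3x hc23
        have : e = b ∨ e = c := by rw [hD2] at he1; simpa using he1
        rcases this with rfl | rfl
        · exact absurd he2 hb3
        · exact he2
      have hac : a ≠ c := fun h => hca h.symm
      have hbc : b ≠ c := fun h => hcb h.symm
      have hD3 : Dset x c3 = {a, c} := by
        refine (Finset.eq_of_subset_of_card_le ?_ ?_).symm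
        · intro k hk; simp at hk; rcases hk with rfl | rfl
          · exact ha3
          · exact hcin3
        · rw [hcard2 c3 hc3C hc3x, Finset.card_pair hac]
      right
      refine ⟨x, hC hx, {a, b, c}, Finset.card_eq_three.mpr ⟨a, b, c, hab, hac, hbc, rfl⟩, ?_⟩
      ext w
      simp only [Lset, Set.mem_setOf_eq]
      constructor
      · intro hwC
        refine ⟨hC hwC, ?_⟩
        intro i hi
        have hsub : Dset x w ⊆ {a, b, c} := by
          by_cases hwx : w = x
          · subst hwx; intro k hk; simp [Dset] at hk
          by_cases hw1 : w = c1
          · subst hw1; rw [hD1]; intro k hk; simp at hk ⊢; tauto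
          by_cases hw2 : w = c2
          · subst hw2; rw [hD2]; intro k hk; simp at hk ⊢; tauto
          by_cases hw3 : w = c3
          · subst hw3; rw [hD3]; intro k hk; simp at hk ⊢; tauto
          exfalso
          have h1 := hinter w hwC c1 hc1C hwx hc1x hw1
          have h2 := hinter w hwC c2 hc2C hwx hc2x hw2
          have h3 := hinter w hwC c3 hc3C hwx hc3x hw3
          rw [hD1] at h1; rw [hD2] at h2; rw [hD3] at h3
          have x1 := pair_xor hab h1
          have x2 := pair_xor hbc h2
          have x3 := pair_xor hac h3
          tauto
        by_contra hne
        apply hi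
        apply hsub
        simp only [Dset, Finset.mem_filter, Finset.mem_univ, true_and]
        exact fun h => hne h.symm
      · rintro ⟨hwp, hag⟩
        have hwps' : w ∈ PsiSet n := hwp.1
        have hsub : Dset x w ⊆ {a, b, c} := by
          intro k hk
          simp only [Dset, Finset.mem_filter, Finset.mem_univ, true_and] at hk
          by_contra hkn
          exact hk (hag k hkn).symm
        have hev : Even (Dset x w).card := by
          rw [even_iff_zmod, dset_card_cast hxps hwps', even_iff_zmod.mp hxev,
            even_iff_zmod.mp hwp.2]
          simp
        have hle : (Dset x w).card ≤ 3 := by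
          have := Finset.card_le_card hsub
          have h3 : ({a, b, c} : Finset (Fin n)).card = 3 :=
            Finset.card_eq_three.mpr ⟨a, b, c, hab, hac, hbc, rfl⟩
          omega
        have h02 : (Dset x w).card = 0 ∨ (Dset x w).card = 2 := by
          rw [Nat.even_iff] at hev; omega
        rcases h02 with h0' | h2'
        · have : Dset x w = ∅ := Finset.card_eq_zero.mp h0'
          have hwx : w = x := by
            apply dset_inj hxps hwps' hxps
            rw [this]; ext k; simp [Dset]
          rw [hwx]; exact hx
        · obtain ⟨p, q, hpq, hD⟩ := Finset.card_eq_two.mp h2'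
          have hpm : p ∈ Dset x w := by rw [hD]; simp
          have hqm : q ∈ Dset x w := by rw [hD]; simp
          have hp : p = a ∨ p = b ∨ p = c := by
            have := hsub hpm; simpa using this
          have hq : q = a ∨ q = b ∨ q = c := by
            have := hsub hqm; simpa using this
          have hcase : Dset x w = Dset x c1 ∨ Dset x w = Dset x c2 ∨ Dset x w = Dset x c3 := by
            rw [hD, hD1, hD2, hD3]
            rcases hp with rfl | rfl | rfl <;> rcases hq with rfl | rfl | rfl <;>
              first
              | exact absurd rfl hpq
              | exact Or.inl rfl
              | exact Or.inl (Finset.pair_comm _ _)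
              | exact Or.inr (Or.inl rfl)
              | exact Or.inr (Or.inl (Finset.pair_comm _ _))
              | exact Or.inr (Or.inr rfl)
              | exact Or.inr (Or.inr (Finset.pair_comm _ _))
          rcases hcase with h | h | h
          · rw [dset_inj hxps hwps' (hwps c1 hc1C) h]; exact hc1C
          · rw [dset_inj hxps hwps' (hwps c2 hc2C) h]; exact hc2C
          · rw [dset_inj hxps hwps' (hwps c3 hc3C) h]; exact hc3C
end

section
/- For n > 4, a 4-clique of the half cube graph ½H_n can be extended to a 5-clique if and only if it is of the form K(v',S) with v' ∈ Ψ⁻_n and |S| = 4; 4-cliques of the form L(v,S) with |S| = 3 cannot be extended to a 5-clique. -/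
/-- A clique of the half cube graph: a set of vertices of `Ψ⁺ₙ` that are pairwise
at Hamming distance 2. -/
def IsHClique {n : ℕ} (C : Set (Fin n → ℤ)) : Prop :=
  C ⊆ PsiPlus n ∧ ∀ x ∈ C, ∀ y ∈ C, x ≠ y → hamming x y = 2

namespace HC
variable {n : ℕ}

def dset (x y : Fin n → ℤ) : Finset (Fin n) := Finset.univ.filter fun i => x i ≠ y i
def nset (v : Fin n → ℤ) : Finset (Fin n) := Finset.univ.filter fun i => v i = -1

lemma hamming_eq (x y : Fin n → ℤ) : hamming x y = (dset x y).card := rfl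
lemma negCount_eq (v : Fin n → ℤ) : negCount v = (nset v).card := rfl

lemma dset_comm (x y : Fin n → ℤ) : dset x y = dset y x := by
  ext i; simp [dset, ne_comm]

lemma mem_dset {x y : Fin n → ℤ} {i : Fin n} : i ∈ dset x y ↔ x i ≠ y i := by
  simp [dset]

lemma dset_self (x : Fin n → ℤ) : dset x x = ∅ := by ext i; simp [dset]

lemma dset_symmDiff {x y z : Fin n → ℤ} (hx : x ∈ PsiSet n) (hy : y ∈ PsiSet n)
    (hz : z ∈ PsiSet n) : dset x z = symmDiff (dset x y) (dset y z) := by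
  ext i
  simp only [mem_dset, Finset.mem_symmDiff]
  rcases hx i with h1 | h1 <;> rcases hy i with h2 | h2 <;> rcases hz i with h3 | h3 <;>
    simp [h1, h2, h3]

lemma eq_of_dset_eq {v w x : Fin n → ℤ} (hv : v ∈ PsiSet n) (hw : w ∈ PsiSet n)
    (hx : x ∈ PsiSet n) (h : dset v w = dset v x) : w = x := by
  funext i
  have := Finset.ext_iff.mp h i
  simp only [mem_dset] at this
  rcases hv i with h1 | h1 <;> rcases hw i with h2 | h2 <;> rcases hx i with h3 | h3 <;>
    simp [h1, h2, h3] at this ⊢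

def flip (v : Fin n → ℤ) (T : Finset (Fin n)) : Fin n → ℤ :=
  fun i => if i ∈ T then -v i else v i

lemma flip_mem_psiSet {v : Fin n → ℤ} (hv : v ∈ PsiSet n) (T : Finset (Fin n)) :
    flip v T ∈ PsiSet n := by
  intro i; by_cases hT : i ∈ T <;> rcases hv i with h | h <;> simp [flip, hT, h]

lemma dset_flip {v : Fin n → ℤ} (hv : v ∈ PsiSet n) (T : Finset (Fin n)) :
    dset v (flip v T) = T := by
  ext i
  by_cases hT : i ∈ T <;> rcases hv i with h | h <;>
    simp [mem_dset, flip, hT, h]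

lemma symmDiff_card_parity (A B : Finset (Fin n)) :
    (symmDiff A B).card % 2 = (A.card + B.card) % 2 := by
  have h1 : symmDiff A B = (A \ B) ∪ (B \ A) := by
    rw [symmDiff_def]; rfl
  have h2 : (symmDiff A B).card = (A \ B).card + (B \ A).card := by
    rw [h1]; exact Finset.card_union_of_disjoint disjoint_sdiff_sdiff
  have h3 := Finset.card_sdiff_add_card_inter A B
  have h4 := Finset.card_sdiff_add_card_inter B A
  rw [Finset.inter_comm] at h4
  omega

lemma symmDiff_card_eq (A B : Finset (Fin n)) :
    (symmDiff A B).card + 2 * (A ∩ B).card = A.card + B.card := by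
  have h1 : symmDiff A B = (A \ B) ∪ (B \ A) := by
    rw [symmDiff_def]; rfl
  have h2 : (symmDiff A B).card = (A \ B).card + (B \ A).card := by
    rw [h1]; exact Finset.card_union_of_disjoint disjoint_sdiff_sdiff
  have h3 := Finset.card_sdiff_add_card_inter A B
  have h4 := Finset.card_sdiff_add_card_inter B A
  rw [Finset.inter_comm] at h4
  omega

lemma nset_symmDiff {v w : Fin n → ℤ} (hv : v ∈ PsiSet n) (hw : w ∈ PsiSet n) :
    nset w = symmDiff (nset v) (dset v w) := by
  ext i
  simp only [nset, Finset.mem_filter, Finset.mem_univ, true_and, Finset.mem_symmDiff, mem_dset]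
  rcases hv i with h1 | h1 <;> rcases hw i with h2 | h2 <;> simp [h1, h2]

lemma psi_parity {v w : Fin n → ℤ} (hv : v ∈ PsiSet n) (hw : w ∈ PsiSet n) :
    negCount w % 2 = (negCount v + hamming v w) % 2 := by
  rw [negCount_eq, negCount_eq, hamming_eq, nset_symmDiff hv hw, symmDiff_card_parity]

end HC

namespace HC
variable {n : ℕ}

lemma flip_parity {v : Fin n → ℤ} (hv : v ∈ PsiSet n) (T : Finset (Fin n)) :
    negCount (flip v T) % 2 = (negCount v + T.card) % 2 := by
  have := psi_parity hv (flip_mem_psiSet hv T)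
  rwa [hamming_eq, dset_flip hv] at this

lemma flip_mem_plus {v : Fin n → ℤ} (hv : v ∈ PsiPlus n) {T : Finset (Fin n)}
    (hT : Even T.card) : flip v T ∈ PsiPlus n := by
  refine ⟨flip_mem_psiSet hv.1 T, ?_⟩
  have h0 := flip_parity hv.1 T
  have h1 := hv.2
  rw [Nat.even_iff] at h1 hT ⊢
  omega

lemma flip_mem_minus {v : Fin n → ℤ} (hv : v ∈ PsiPlus n) {T : Finset (Fin n)}
    (hT : ¬ Even T.card) : flip v T ∈ PsiMinus n := by
  refine ⟨flip_mem_psiSet hv.1 T, ?_⟩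
  have h0 := flip_parity hv.1 T
  have h1 := hv.2
  rw [Nat.even_iff] at h1 hT ⊢
  omega

lemma flip_mem_plus_of_minus {v : Fin n → ℤ} (hv : v ∈ PsiMinus n) {T : Finset (Fin n)}
    (hT : ¬ Even T.card) : flip v T ∈ PsiPlus n := by
  refine ⟨flip_mem_psiSet hv.1 T, ?_⟩
  have h0 := flip_parity hv.1 T
  have h1 := hv.2
  rw [Nat.even_iff] at h1 hT ⊢
  omega

lemma even_hamming {v w : Fin n → ℤ} (hv : v ∈ PsiPlus n) (hw : w ∈ PsiPlus n) :
    Even (hamming v w) := by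
  have := psi_parity hv.1 hw.1
  have h1 := hv.2; have h2 := hw.2
  rw [Nat.even_iff] at h1 h2 ⊢
  omega

lemma dset_eq_singleton {v w : Fin n → ℤ} {i : Fin n} :
    dset v w = {i} ↔ (w i ≠ v i ∧ ∀ j, j ≠ i → w j = v j) := by
  rw [Finset.ext_iff]
  simp only [mem_dset, Finset.mem_singleton]
  constructor
  · intro h
    refine ⟨Ne.symm ((h i).mpr rfl), fun j hj => ?_⟩
    by_contra hne
    exact hj ((h j).mp (Ne.symm hne))
  · rintro ⟨h1, h2⟩ j
    constructor
    · intro hne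
      by_contra hji
      exact (Ne.symm hne) (h2 j hji)
    · rintro rfl
      exact Ne.symm h1

lemma mem_Kset_iff {v' w : Fin n → ℤ} {S : Finset (Fin n)} :
    w ∈ Kset v' S ↔ w ∈ PsiPlus n ∧ ∃ i ∈ S, dset v' w = {i} := by
  unfold Kset
  simp only [Set.mem_setOf_eq]
  refine and_congr_right fun _ => ?_
  constructor
  · rintro ⟨i, hi, h⟩; exact ⟨i, hi, dset_eq_singleton.mpr h⟩
  · rintro ⟨i, hi, h⟩; exact ⟨i, hi, dset_eq_singleton.mp h⟩

lemma mem_Lset_iff {v w : Fin n → ℤ} {S : Finset (Fin n)} :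
    w ∈ Lset v S ↔ w ∈ PsiPlus n ∧ dset v w ⊆ S := by
  unfold Lset
  simp only [Set.mem_setOf_eq]
  refine and_congr_right fun _ => ?_
  constructor
  · intro h j hj
    rw [mem_dset] at hj
    by_contra hjS
    exact hj (h j hjS).symm
  · intro h j hj
    by_contra hne
    exact hj (h (mem_dset.mpr (Ne.symm hne)))

lemma clique_subset {C D : Set (Fin n → ℤ)} (h : C ⊆ D) (hD : IsHClique D) : IsHClique C :=
  ⟨fun x hx => hD.1 (h hx), fun x hx y hy => hD.2 x (h hx) y (h hy)⟩

lemma pair_card {i j : Fin n} (hij : i ≠ j) : ({i, j} : Finset (Fin n)).card = 2 := by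
  rw [Finset.card_insert_of_notMem (by simp [hij]), Finset.card_singleton]

lemma singleton_symmDiff_pair {i j : Fin n} (hij : i ≠ j) :
    symmDiff ({i} : Finset (Fin n)) {i, j} = {j} := by
  ext x
  by_cases h1 : x = i <;> by_cases h2 : x = j <;>
    simp [Finset.mem_symmDiff, h1, h2, hij] <;> simp_all

lemma Kset_clique {v' : Fin n → ℤ} (hv' : v' ∈ PsiMinus n) (S : Finset (Fin n)) :
    IsHClique (Kset v' S) := by
  constructor
  · intro w hw; exact hw.1
  · intro x hx y hy hxy
    rw [mem_Kset_iff] at hx hy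
    obtain ⟨hxp, i, hiS, hxi⟩ := hx
    obtain ⟨hyp, j, hjS, hyj⟩ := hy
    have hij : i ≠ j := by
      rintro rfl
      exact hxy (eq_of_dset_eq hv'.1 hxp.1 hyp.1 (hxi.trans hyj.symm))
    have hd : dset x y = symmDiff (dset x v') (dset v' y) :=
      dset_symmDiff hxp.1 hv'.1 hyp.1
    rw [hamming_eq, hd, dset_comm x v', hxi, hyj]
    have h0 : ({i} : Finset (Fin n)) ∩ {j} = ∅ := by
      ext x; simp; rintro rfl; exact hij
    have := symmDiff_card_eq ({i} : Finset (Fin n)) {j}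
    rw [h0] at this
    simpa using this

lemma inter_pair_card {W : Finset (Fin n)} {i j : Fin n} (hij : i ≠ j)
    (h : (W ∩ ({i, j} : Finset (Fin n))).card = 1) : (i ∈ W ↔ j ∉ W) := by
  by_cases hi : i ∈ W <;> by_cases hj : j ∈ W <;> simp [hi, hj]
  · have hsub : ({i, j} : Finset (Fin n)) ⊆ W := by
      intro x hx; simp at hx; rcases hx with rfl | rfl <;> assumption
    rw [Finset.inter_eq_right.mpr hsub, pair_card hij] at h
    omega
  · have : W ∩ ({i, j} : Finset (Fin n)) = ∅ := by
      ext x; simp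
      intro hx
      exact ⟨fun h' => hi (h' ▸ hx), fun h' => hj (h' ▸ hx)⟩
    rw [this] at h
    simp at h

end HC

namespace HC
variable {n : ℕ}

lemma flip_mem_Lset {v : Fin n → ℤ} (hv : v ∈ PsiPlus n) {S T : Finset (Fin n)}
    (hTS : T ⊆ S) (hT : Even T.card) : flip v T ∈ Lset v S := by
  rw [mem_Lset_iff]
  refine ⟨flip_mem_plus hv hT, ?_⟩
  rw [dset_flip hv.1]
  exact hTS

lemma L_not_ext {v : Fin n → ℤ} (hv : v ∈ PsiPlus n) {S : Finset (Fin n)} (hS : S.card = 3) :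
    ¬ ∃ w ∉ Lset v S, IsHClique (insert w (Lset v S)) := by
  rintro ⟨w, hw, hcl⟩
  obtain ⟨i, j, k, hij, hik, hjk, rfl⟩ := Finset.card_eq_three.mp hS
  have hijS : ({i, j} : Finset (Fin n)) ⊆ {i, j, k} := by intro x; simp; tauto
  have hjkS : ({j, k} : Finset (Fin n)) ⊆ {i, j, k} := by intro x; simp; tauto
  have hikS : ({i, k} : Finset (Fin n)) ⊆ {i, j, k} := by intro x; simp; tauto
  have hvL : v ∈ Lset v {i, j, k} := ⟨hv, fun _ _ => rfl⟩
  have hbL := flip_mem_Lset hv hijS (by rw [pair_card hij]; exact even_two)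
  have hcL := flip_mem_Lset hv hjkS (by rw [pair_card hjk]; exact even_two)
  have hdL := flip_mem_Lset hv hikS (by rw [pair_card hik]; exact even_two)
  have hwP : w ∈ PsiPlus n := hcl.1 (Set.mem_insert _ _)
  -- w is at hamming distance 2 from every element of Lset
  have key : ∀ x ∈ Lset v ({i, j, k} : Finset (Fin n)), hamming w x = 2 := by
    intro x hx
    refine hcl.2 w (Set.mem_insert _ _) x (Set.mem_insert_of_mem _ hx) ?_
    rintro rfl; exact hw hx
  have hwv := key v hvL
  set W := dset v w with hW
  have hWcard : W.card = 2 := by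
    rw [← hwv, hamming_eq, dset_comm]
  have pairfact : ∀ p q : Fin n, p ≠ q → (({p, q} : Finset (Fin n)) ⊆ {i, j, k}) →
      (p ∈ W ↔ q ∉ W) := by
    intro p q hpq hsub
    have hx := key _ (flip_mem_Lset hv hsub (by rw [pair_card hpq]; exact even_two))
    have hd : dset w (flip v {p, q}) = symmDiff (dset w v) (dset v (flip v {p, q})) :=
      dset_symmDiff hwP.1 hv.1 (flip_mem_psiSet hv.1 _)
    rw [hamming_eq, hd, dset_comm w v, dset_flip hv.1, ← hW] at hx
    have hcards := symmDiff_card_eq W ({p, q} : Finset (Fin n))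
    rw [hx, hWcard, pair_card hpq] at hcards
    exact inter_pair_card hpq (by omega)
  have h1 := pairfact i j hij hijS
  have h2 := pairfact j k hjk hjkS
  have h3 := pairfact i k hik hikS
  tauto

lemma K_extend (hn : 4 < n) {v' : Fin n → ℤ} (hv' : v' ∈ PsiMinus n) {S : Finset (Fin n)}
    (hS : S.card = 4) : ∃ w ∉ Kset v' S, IsHClique (insert w (Kset v' S)) := by
  have hex : ∃ i, i ∉ S := by
    by_contra h
    push_neg at h
    have hle : (Finset.univ : Finset (Fin n)).card ≤ S.card :=
      Finset.card_le_card fun x _ => h x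
    rw [Finset.card_univ, Fintype.card_fin, hS] at hle
    omega
  obtain ⟨i, hi⟩ := hex
  have hv'P := hv'.1
  refine ⟨flip v' {i}, ?_, ?_⟩
  · intro hmem
    rw [mem_Kset_iff] at hmem
    obtain ⟨_, j, hjS, hj⟩ := hmem
    rw [dset_flip hv'P] at hj
    have : i = j := by simpa using hj
    exact hi (this ▸ hjS)
  · apply clique_subset _ (Kset_clique hv' (insert i S))
    intro x hx
    rcases Set.mem_insert_iff.mp hx with rfl | hx
    · rw [mem_Kset_iff]
      refine ⟨flip_mem_plus_of_minus hv' (by simp), i, Finset.mem_insert_self _ _,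
        dset_flip hv'P _⟩
    · rw [mem_Kset_iff] at hx ⊢
      obtain ⟨h1, j, hj, h2⟩ := hx
      exact ⟨h1, j, Finset.mem_insert_of_mem hj, h2⟩

end HC

namespace HC
variable {n : ℕ}

lemma eq_singleton_of_card_one {T : Finset (Fin n)} {i : Fin n} (h1 : T.card = 1)
    (hi : i ∈ T) : T = {i} := by
  obtain ⟨m, hm⟩ := Finset.card_eq_one.mp h1
  rw [hm] at hi ⊢
  simp at hi
  rw [hi]

lemma pair_struct {B : Finset (Fin n)} {i : Fin n} (h2 : B.card = 2) (hi : i ∈ B) :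
    ∃ j, j ≠ i ∧ B = {i, j} := by
  have he : (B.erase i).card = 1 := by rw [Finset.card_erase_of_mem hi, h2]
  obtain ⟨j, hj⟩ := Finset.card_eq_one.mp he
  have hji : j ≠ i := by
    have : j ∈ B.erase i := hj ▸ Finset.mem_singleton_self j
    exact (Finset.mem_erase.mp this).1
  refine ⟨j, hji, ?_⟩
  rw [← Finset.insert_erase hi, hj]

lemma inter_card_one {a x y : Fin n → ℤ} (ha : a ∈ PsiSet n) (hx : x ∈ PsiSet n)
    (hy : y ∈ PsiSet n) (hxy : hamming x y = 2) (hax : hamming a x = 2)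
    (hay : hamming a y = 2) : (dset a x ∩ dset a y).card = 1 := by
  have hd : dset x y = symmDiff (dset x a) (dset a y) := dset_symmDiff hx ha hy
  rw [hamming_eq, hd, dset_comm x a] at hxy
  rw [hamming_eq] at hax hay
  have := symmDiff_card_eq (dset a x) (dset a y)
  omega

lemma classify {C : Set (Fin n → ℤ)} (hC : IsHClique C) (h4 : C.ncard = 4) :
    (∃ v' ∈ PsiMinus n, ∃ S : Finset (Fin n), S.card = 4 ∧ C = Kset v' S) ∨
    (∃ v ∈ PsiPlus n, ∃ S : Finset (Fin n), S.card = 3 ∧ C = Lset v S) := by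
  -- extract four distinct elements
  have hfin : C.Finite := by
    by_contra h
    rw [Set.Infinite.ncard h] at h4
    omega
  have hne : C.Nonempty := (Set.ncard_pos hfin).mp (by omega)
  obtain ⟨a, ha⟩ := hne
  have h3 : (C \ {a}).ncard = 3 := by
    rw [Set.ncard_diff_singleton_of_mem ha, h4]
  obtain ⟨b, c, d, hbc, hbd, hcd, heq⟩ := Set.ncard_eq_three.mp h3
  have hb' : b ∈ C \ {a} := by rw [heq]; exact Set.mem_insert _ _
  have hc' : c ∈ C \ {a} := by rw [heq]; simp
  have hd' : d ∈ C \ {a} := by rw [heq]; simp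
  have hb : b ∈ C := hb'.1
  have hc : c ∈ C := hc'.1
  have hd : d ∈ C := hd'.1
  have hab : a ≠ b := fun h => hb'.2 (by simp [h.symm])
  have hac : a ≠ c := fun h => hc'.2 (by simp [h.symm])
  have had : a ≠ d := fun h => hd'.2 (by simp [h.symm])
  have hCeq : C = insert a {b, c, d} := by
    rw [← heq, Set.insert_diff_singleton, Set.insert_eq_of_mem ha]
  have haP : a ∈ PsiPlus n := hC.1 ha
  have hbP : b ∈ PsiPlus n := hC.1 hb
  have hcP : c ∈ PsiPlus n := hC.1 hc
  have hdP : d ∈ PsiPlus n := hC.1 hd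
  have hab2 : hamming a b = 2 := hC.2 a ha b hb hab
  have hac2 : hamming a c = 2 := hC.2 a ha c hc hac
  have had2 : hamming a d = 2 := hC.2 a ha d hd had
  have hbc2 : hamming b c = 2 := hC.2 b hb c hc hbc
  have hbd2 : hamming b d = 2 := hC.2 b hb d hd hbd
  have hcd2 : hamming c d = 2 := hC.2 c hc d hd hcd
  have hB2 : (dset a b).card = 2 := by rw [← hamming_eq]; exact hab2
  have hC2 : (dset a c).card = 2 := by rw [← hamming_eq]; exact hac2
  have hD2 : (dset a d).card = 2 := by rw [← hamming_eq]; exact had2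
  have hBC : (dset a b ∩ dset a c).card = 1 :=
    inter_card_one haP.1 hbP.1 hcP.1 hbc2 hab2 hac2
  have hBD : (dset a b ∩ dset a d).card = 1 :=
    inter_card_one haP.1 hbP.1 hdP.1 hbd2 hab2 had2
  have hCD : (dset a c ∩ dset a d).card = 1 :=
    inter_card_one haP.1 hcP.1 hdP.1 hcd2 hac2 had2
  obtain ⟨i, hiBC⟩ := Finset.card_eq_one.mp hBC
  have hiB : i ∈ dset a b := (Finset.mem_inter.mp (hiBC ▸ Finset.mem_singleton_self i)).1
  have hiC : i ∈ dset a c := (Finset.mem_inter.mp (hiBC ▸ Finset.mem_singleton_self i)).2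
  obtain ⟨j, hji, hBij⟩ := pair_struct hB2 hiB
  obtain ⟨k, hki, hCik⟩ := pair_struct hC2 hiC
  have hjB : j ∈ dset a b := by rw [hBij]; simp
  have hkC : k ∈ dset a c := by rw [hCik]; simp
  have hjk : j ≠ k := by
    rintro rfl
    have : j ∈ dset a b ∩ dset a c := Finset.mem_inter.mpr ⟨hjB, hkC⟩
    rw [hiBC] at this
    simp at this
    exact hji this
  by_cases hiD : i ∈ dset a d
  · -- K case
    obtain ⟨l, hli, hDil⟩ := pair_struct hD2 hiD
    have hlD : l ∈ dset a d := by rw [hDil]; simp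
    have hBDi : dset a b ∩ dset a d = {i} :=
      eq_singleton_of_card_one hBD (Finset.mem_inter.mpr ⟨hiB, hiD⟩)
    have hCDi : dset a c ∩ dset a d = {i} :=
      eq_singleton_of_card_one hCD (Finset.mem_inter.mpr ⟨hiC, hiD⟩)
    have hlj : l ≠ j := by
      rintro rfl
      have : l ∈ dset a b ∩ dset a d := Finset.mem_inter.mpr ⟨hjB, hlD⟩
      rw [hBDi] at this
      simp at this
      exact hli this
    have hlk : l ≠ k := by
      rintro rfl
      have : l ∈ dset a c ∩ dset a d := Finset.mem_inter.mpr ⟨hkC, hlD⟩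
      rw [hCDi] at this
      simp at this
      exact hli this
    have hij : i ≠ j := Ne.symm hji
    have hik : i ≠ k := Ne.symm hki
    have hil : i ≠ l := Ne.symm hli
    have hjl : j ≠ l := Ne.symm hlj
    have hkl : k ≠ l := Ne.symm hlk
    have hS4 : ({i, j, k, l} : Finset (Fin n)).card = 4 := by
      rw [Finset.card_insert_of_notMem (by simp [hij, hik, hil]),
        Finset.card_insert_of_notMem (by simp [hjk, hjl]), pair_card hkl]
    have hv'M : flip a {i} ∈ PsiMinus n := flip_mem_minus haP (by simp)
    have hv'P : flip a {i} ∈ PsiSet n := hv'M.1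
    have hda : dset (flip a {i}) a = {i} := by rw [dset_comm]; exact dset_flip haP.1 {i}
    have hdb : dset (flip a {i}) b = {j} := by
      rw [dset_symmDiff hv'P haP.1 hbP.1, hda, hBij, singleton_symmDiff_pair hij]
    have hdc : dset (flip a {i}) c = {k} := by
      rw [dset_symmDiff hv'P haP.1 hcP.1, hda, hCik, singleton_symmDiff_pair hik]
    have hdd : dset (flip a {i}) d = {l} := by
      rw [dset_symmDiff hv'P haP.1 hdP.1, hda, hDil, singleton_symmDiff_pair hil]
    left
    refine ⟨flip a {i}, hv'M, {i, j, k, l}, hS4, ?_⟩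
    ext x
    constructor
    · intro hx
      rw [hCeq] at hx
      have hx4 : x = a ∨ x = b ∨ x = c ∨ x = d := by simpa using hx
      rw [mem_Kset_iff]
      rcases hx4 with rfl | rfl | rfl | rfl
      · exact ⟨haP, i, by simp, hda⟩
      · exact ⟨hbP, j, by simp, hdb⟩
      · exact ⟨hcP, k, by simp, hdc⟩
      · exact ⟨hdP, l, by simp, hdd⟩
    · intro hx
      rw [mem_Kset_iff] at hx
      obtain ⟨hxP, m, hmS, hdm⟩ := hx
      have hm4 : m = i ∨ m = j ∨ m = k ∨ m = l := by simpa using hmS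
      rw [hCeq]
      rcases hm4 with rfl | rfl | rfl | rfl
      · have : x = a := eq_of_dset_eq hv'P hxP.1 haP.1 (hdm.trans hda.symm)
        simp [this]
      · have : x = b := eq_of_dset_eq hv'P hxP.1 hbP.1 (hdm.trans hdb.symm)
        simp [this]
      · have : x = c := eq_of_dset_eq hv'P hxP.1 hcP.1 (hdm.trans hdc.symm)
        simp [this]
      · have : x = d := eq_of_dset_eq hv'P hxP.1 hdP.1 (hdm.trans hdd.symm)
        simp [this]
  · -- L case
    have hjD : j ∈ dset a d := by
      obtain ⟨m, hm⟩ := Finset.card_eq_one.mp hBD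
      have hmB : m ∈ dset a b := (Finset.mem_inter.mp (hm ▸ Finset.mem_singleton_self m)).1
      have hmD : m ∈ dset a d := (Finset.mem_inter.mp (hm ▸ Finset.mem_singleton_self m)).2
      rw [hBij] at hmB
      simp at hmB
      rcases hmB with rfl | rfl
      · exact absurd hmD hiD
      · exact hmD
    have hkD : k ∈ dset a d := by
      obtain ⟨m, hm⟩ := Finset.card_eq_one.mp hCD
      have hmC : m ∈ dset a c := (Finset.mem_inter.mp (hm ▸ Finset.mem_singleton_self m)).1
      have hmD : m ∈ dset a d := (Finset.mem_inter.mp (hm ▸ Finset.mem_singleton_self m)).2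
      rw [hCik] at hmC
      simp at hmC
      rcases hmC with rfl | rfl
      · exact absurd hmD hiD
      · exact hmD
    have hDjk : dset a d = {j, k} := by
      refine (Finset.eq_of_subset_of_card_le ?_ ?_).symm
      · intro x hx
        simp at hx
        rcases hx with rfl | rfl
        · exact hjD
        · exact hkD
      · rw [hD2, pair_card hjk]
    have hij : i ≠ j := Ne.symm hji
    have hik : i ≠ k := Ne.symm hki
    have hS3 : ({i, j, k} : Finset (Fin n)).card = 3 := by
      rw [Finset.card_insert_of_notMem (by simp [hij, hik]), pair_card hjk]
    right
    refine ⟨a, haP, {i, j, k}, hS3, ?_⟩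
    have hsubB : dset a b ⊆ {i, j, k} := by rw [hBij]; intro x hx; simp at hx ⊢; tauto
    have hsubC : dset a c ⊆ {i, j, k} := by rw [hCik]; intro x hx; simp at hx ⊢; tauto
    have hsubD : dset a d ⊆ {i, j, k} := by rw [hDjk]; intro x hx; simp at hx ⊢; tauto
    ext x
    constructor
    · intro hx
      rw [hCeq] at hx
      have hx4 : x = a ∨ x = b ∨ x = c ∨ x = d := by simpa using hx
      rw [mem_Lset_iff]
      rcases hx4 with rfl | rfl | rfl | rfl
      · exact ⟨haP, by rw [dset_self]; exact Finset.empty_subset _⟩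
      · exact ⟨hbP, hsubB⟩
      · exact ⟨hcP, hsubC⟩
      · exact ⟨hdP, hsubD⟩
    · intro hx
      rw [mem_Lset_iff] at hx
      obtain ⟨hxP, hsub⟩ := hx
      have hev : Even ((dset a x).card) := by
        rw [← hamming_eq]; exact even_hamming haP hxP
      have hle : (dset a x).card ≤ 3 := by
        have := Finset.card_le_card hsub
        omega
      have h02 : (dset a x).card = 0 ∨ (dset a x).card = 2 := by
        rw [Nat.even_iff] at hev; omega
      rw [hCeq]
      rcases h02 with h0 | h2
      · have hxa : x = a := by
          refine eq_of_dset_eq haP.1 hxP.1 haP.1 ?_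
          rw [Finset.card_eq_zero.mp h0, dset_self]
        simp [hxa]
      · obtain ⟨p, q, hpq, hpqe⟩ := Finset.card_eq_two.mp h2
        have hp : p = i ∨ p = j ∨ p = k := by
          have := hsub (by rw [hpqe]; simp : p ∈ dset a x)
          simpa using this
        have hq : q = i ∨ q = j ∨ q = k := by
          have := hsub (by rw [hpqe]; simp : q ∈ dset a x)
          simpa using this
        have trich : dset a x = dset a b ∨ dset a x = dset a c ∨ dset a x = dset a d := by
          rw [hpqe, hBij, hCik, hDjk]
          rcases hp with rfl | rfl | rfl <;> rcases hq with rfl | rfl | rfl <;>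
            first
              | exact absurd rfl hpq
              | (left; rfl)
              | (left; exact Finset.pair_comm _ _)
              | (right; left; rfl)
              | (right; left; exact Finset.pair_comm _ _)
              | (right; right; rfl)
              | (right; right; exact Finset.pair_comm _ _)
        rcases trich with h | h | h
        · have : x = b := eq_of_dset_eq haP.1 hxP.1 hbP.1 h
          simp [this]
        · have : x = c := eq_of_dset_eq haP.1 hxP.1 hcP.1 h
          simp [this]
        · have : x = d := eq_of_dset_eq haP.1 hxP.1 hdP.1 h
          simp [this]

end HC

theorem stmt14 (n : ℕ) (hn : 4 < n) :
    (∀ C : Set (Fin n → ℤ), IsHClique C → C.ncard = 4 →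
      ((∃ w ∉ C, IsHClique (insert w C)) ↔
        ∃ v' ∈ PsiMinus n, ∃ S : Finset (Fin n), S.card = 4 ∧ C = Kset v' S)) ∧
    (∀ v ∈ PsiPlus n, ∀ S : Finset (Fin n), S.card = 3 →
      ¬ ∃ w ∉ Lset v S, IsHClique (insert w (Lset v S))) := by
  constructor
  · intro C hC h4
    constructor
    · rintro ⟨w, hw, hcl⟩
      rcases HC.classify hC h4 with h | ⟨v, hv, S, hS, rfl⟩
      · exact h
      · exact absurd ⟨w, hw, hcl⟩ (HC.L_not_ext hv hS)
    · rintro ⟨v', hv', S, hS, rfl⟩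
      exact HC.K_extend hn hv' hS
  · intro v hv S hS
    exact HC.L_not_ext hv hS
end

section
/- For n ≥ 4 and 3 ≤ k < n, the number of subsets of Ψ⁺_n of the form L(v,S) with |S| = k equals 2^{n-k}·C(n,k), and the number of subsets of the form K(v',S) with v' ∈ Ψ⁻_n and |S| = k+1 equals 2^{n-1}·C(n,k+1). -/
namespace Stmt15Aux
open Finset

variable {n : ℕ}

def toVec (g : Fin n → Bool) : Fin n → ℤ := fun i => if g i then -1 else 1

lemma toVec_mem (g : Fin n → Bool) : toVec g ∈ PsiSet n := by
  intro i; unfold toVec; split <;> simp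

lemma toVec_inj : Function.Injective (toVec (n := n)) := by
  intro g h hg
  funext i
  have := congrFun hg i
  unfold toVec at this
  cases hgi : g i <;> cases hhi : h i <;> simp [hgi, hhi] at this ⊢

def flip (v : Fin n → ℤ) (i : Fin n) : Fin n → ℤ := Function.update v i (-(v i))

lemma flip_self (v : Fin n → ℤ) (i : Fin n) : flip v i i = -(v i) := by
  simp [flip]

lemma flip_ne (v : Fin n → ℤ) {i j : Fin n} (h : j ≠ i) : flip v i j = v j := by
  simp [flip, Function.update_of_ne h]

lemma flip_mem (v : Fin n → ℤ) (hv : v ∈ PsiSet n) (i : Fin n) : flip v i ∈ PsiSet n := by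
  intro j
  by_cases hj : j = i
  · subst hj; rw [flip_self]; rcases hv j with h | h <;> simp [h]
  · rw [flip_ne _ hj]; exact hv j

lemma negCount_erase (v : Fin n → ℤ) (i₀ : Fin n) :
    negCount v = ((univ.erase i₀).filter fun i => v i = -1).card + (if v i₀ = -1 then 1 else 0) := by
  unfold negCount
  conv_lhs => rw [← Finset.insert_erase (Finset.mem_univ i₀), Finset.filter_insert]
  split
  · rw [Finset.card_insert_of_notMem (by simp)]
  · simp

lemma flip_parity (v : Fin n → ℤ) (hv : v ∈ PsiSet n) (i₀ : Fin n) :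
    Even (negCount (flip v i₀)) ↔ ¬ Even (negCount v) := by
  have he : ((univ.erase i₀).filter fun i => flip v i₀ i = -1)
      = ((univ.erase i₀).filter fun i => v i = -1) := by
    apply Finset.filter_congr
    intro j hj
    rw [flip_ne _ (Finset.ne_of_mem_erase hj)]
  rw [negCount_erase (flip v i₀) i₀, negCount_erase v i₀, he, flip_self]
  rcases hv i₀ with h | h <;> simp [h, Nat.even_add_one]

lemma toVec_update (g : Fin n → Bool) (i₀ : Fin n) :
    toVec (Function.update g i₀ (!(g i₀))) = flip (toVec g) i₀ := by
  funext j
  by_cases hj : j = i₀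
  · subst hj
    simp only [toVec, flip_self, Function.update_self]
    cases h : g j <;> simp [h]
  · simp [toVec, flip_ne _ hj, Function.update_of_ne hj]

lemma Lset_congr {v v' : Fin n → ℤ} {S : Finset (Fin n)} (h : ∀ i ∉ S, v i = v' i) :
    Lset v S = Lset v' S := by
  ext w
  constructor
  · rintro ⟨hw, ha⟩; exact ⟨hw, fun i hi => (ha i hi).trans (h i hi)⟩
  · rintro ⟨hw, ha⟩; exact ⟨hw, fun i hi => (ha i hi).trans (h i hi).symm⟩

lemma exists_mem_Lset (v : Fin n → ℤ) (hv : v ∈ PsiSet n) {S : Finset (Fin n)} (hS : S.Nonempty) :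
    ∃ w, w ∈ Lset v S := by
  obtain ⟨i₀, hi₀⟩ := hS
  by_cases h : Even (negCount v)
  · exact ⟨v, ⟨hv, h⟩, fun i _ => rfl⟩
  · refine ⟨flip v i₀, ⟨⟨flip_mem v hv i₀, (flip_parity v hv i₀).2 h⟩, fun i hi => flip_ne _ ?_⟩⟩
    exact fun he => hi (he ▸ hi₀)

lemma mem_S_iff (v : Fin n → ℤ) (hv : v ∈ PsiSet n) {S : Finset (Fin n)} (hS : 2 ≤ S.card)
    (i : Fin n) : i ∈ S ↔ ∃ w₁ ∈ Lset v S, ∃ w₂ ∈ Lset v S, w₁ i ≠ w₂ i := by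
  constructor
  · intro hiS
    obtain ⟨w, hw⟩ := exists_mem_Lset v hv ((Finset.card_pos (s := S)).mp (by omega))
    obtain ⟨a, ha, b, hb, hab⟩ := (Finset.one_lt_card (s := S)).mp (by omega)
    obtain ⟨j, hjS, hji⟩ : ∃ j ∈ S, j ≠ i := by
      by_cases hai : a = i
      · exact ⟨b, hb, fun hbi => hab (by rw [hai, hbi])⟩
      · exact ⟨a, ha, hai⟩
    have hwP : w ∈ PsiSet n := hw.1.1
    have hw1P := flip_mem w hwP i
    refine ⟨flip (flip w i) j, ⟨⟨flip_mem _ hw1P j, ?_⟩, ?_⟩, w, hw, ?_⟩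
    · rw [flip_parity _ hw1P j, flip_parity _ hwP i]
      exact not_not_intro hw.1.2
    · intro l hl
      rw [flip_ne _ (by rintro rfl; exact hl hjS), flip_ne _ (by rintro rfl; exact hl hiS)]
      exact hw.2 l hl
    · rw [flip_ne _ (Ne.symm hji), flip_self]
      rcases hwP i with h | h <;> rw [h] <;> norm_num
  · rintro ⟨w₁, h₁, w₂, h₂, hne⟩
    by_contra hiS
    exact hne ((h₁.2 i hiS).trans (h₂.2 i hiS).symm)

def LT (n k : ℕ) : Type :=
  {p : Finset (Fin n) × (Fin n → Bool) // p.1.card = k ∧ ∀ i ∈ p.1, p.2 i = false}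

instance (n k : ℕ) : Fintype (LT n k) := Subtype.fintype _

def FL (n k : ℕ) (p : LT n k) : Set (Fin n → ℤ) := Lset (toVec p.1.2) p.1.1

lemma FL_inj {k : ℕ} (hk : 2 ≤ k) : Function.Injective (FL n k) := by
  rintro ⟨⟨S₁, g₁⟩, hc₁, hn₁⟩ ⟨⟨S₂, g₂⟩, hc₂, hn₂⟩ h
  simp only [FL] at h
  dsimp only at hc₁ hn₁ hc₂ hn₂
  have hv₁ := toVec_mem g₁
  have hv₂ := toVec_mem g₂
  have hS : S₁ = S₂ := by
    ext i
    rw [mem_S_iff (toVec g₁) hv₁ (hc₁ ▸ hk) i, h, ← mem_S_iff (toVec g₂) hv₂ (hc₂ ▸ hk) i]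
  have hg : g₁ = g₂ := by
    funext i
    by_cases hi : i ∈ S₁
    · rw [hn₁ i hi, hn₂ i (hS ▸ hi)]
    · obtain ⟨w, hw⟩ := exists_mem_Lset (toVec g₁) hv₁ (S := S₁)
        ((Finset.card_pos (s := S₁)).mp (by omega))
      have hw2 : w ∈ Lset (toVec g₂) S₂ := h ▸ hw
      have e1 : w i = toVec g₁ i := hw.2 i hi
      have e2 : w i = toVec g₂ i := hw2.2 i (hS ▸ hi)
      have e3 : toVec g₁ i = toVec g₂ i := by rw [← e1, e2]
      unfold toVec at e3
      cases h1 : g₁ i <;> cases h2 : g₂ i <;> simp [h1, h2] at e3 ⊢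
  exact Subtype.ext (by simp [hS, hg])

lemma range_FL {k : ℕ} (hk : 1 ≤ k) :
    {X : Set (Fin n → ℤ) | ∃ v ∈ PsiPlus n, ∃ S : Finset (Fin n), S.card = k ∧ X = Lset v S}
      = Set.range (FL n k) := by
  ext X
  constructor
  · rintro ⟨v, hv, S, hSc, rfl⟩
    refine ⟨⟨(S, fun i => if i ∈ S then false else decide (v i = -1)), hSc,
      fun i hi => if_pos hi⟩, ?_⟩
    simp only [FL]
    apply Lset_congr
    intro i hi
    rcases hv.1 i with h | h <;> simp [toVec, hi, h]
  · rintro ⟨⟨⟨S, g⟩, hc, hnorm⟩, rfl⟩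
    dsimp only at hc
    obtain ⟨w, hw⟩ := exists_mem_Lset (toVec g) (toVec_mem g) (S := S)
      ((Finset.card_pos (s := S)).mp (by omega))
    refine ⟨w, hw.1, S, hc, ?_⟩
    simp only [FL]
    exact Lset_congr fun i hi => (hw.2 i hi).symm

lemma card_LT (n k : ℕ) : Fintype.card (LT n k) = 2 ^ (n - k) * n.choose k := by
  have e : LT n k ≃
      Σ S : {S : Finset (Fin n) // S.card = k}, {g : Fin n → Bool // ∀ i ∈ S.1, g i = false} :=
    { toFun := fun p => ⟨⟨p.1.1, p.2.1⟩, ⟨p.1.2, p.2.2⟩⟩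
      invFun := fun q => ⟨(q.1.1, q.2.1), q.1.2, q.2.2⟩
      left_inv := fun p => rfl
      right_inv := fun q => rfl }
  have hfib : ∀ S : {S : Finset (Fin n) // S.card = k},
      Fintype.card {g : Fin n → Bool // ∀ i ∈ S.1, g i = false} = 2 ^ (n - k) := by
    intro S
    have e2 : {g : Fin n → Bool // ∀ i ∈ S.1, g i = false} ≃ ({i : Fin n // i ∉ S.1} → Bool) :=
      { toFun := fun g j => g.1 j.1
        invFun := fun h =>
          ⟨fun i => if hi : i ∈ S.1 then false else h ⟨i, hi⟩, fun i hi => dif_pos hi⟩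
        left_inv := fun g => Subtype.ext (funext fun i => by
          dsimp only
          by_cases hi : i ∈ S.1
          · rw [dif_pos hi, g.2 i hi]
          · rw [dif_neg hi])
        right_inv := fun h => funext fun j => by dsimp only; rw [dif_neg j.2] }
    rw [Fintype.card_congr e2, Fintype.card_fun, Fintype.card_bool]
    congr 1
    rw [Fintype.card_subtype_compl, Fintype.card_fin, Fintype.card_coe, S.2]
  rw [Fintype.card_congr e, Fintype.card_sigma]
  simp only [hfib]
  rw [Finset.sum_const, Finset.card_univ, Fintype.card_finset_len, Fintype.card_fin,
    smul_eq_mul, mul_comm]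
section PartB
variable {n : ℕ}

lemma mem_Kset_iff {v : Fin n → ℤ} (hv : v ∈ PsiSet n) (hodd : ¬ Even (negCount v))
    {S : Finset (Fin n)} {w : Fin n → ℤ} :
    w ∈ Kset v S ↔ ∃ i ∈ S, w = flip v i := by
  constructor
  · rintro ⟨⟨hwP, hwE⟩, i, hiS, hne, hag⟩
    refine ⟨i, hiS, funext fun j => ?_⟩
    by_cases hj : j = i
    · subst hj
      rw [flip_self]
      rcases hv j with h | h <;> rcases hwP j with h' | h' <;> omega
    · rw [flip_ne _ hj]; exact hag j hj
  · rintro ⟨i, hiS, rfl⟩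
    refine ⟨⟨flip_mem v hv i, (flip_parity v hv i).2 hodd⟩, i, hiS, ?_, fun j hj => flip_ne _ hj⟩
    rw [flip_self]
    rcases hv i with h | h <;> rw [h] <;> norm_num

lemma flip_index_eq {v : Fin n → ℤ} (hv : v ∈ PsiSet n) {i l : Fin n}
    (h : flip v i = flip v l) : i = l := by
  by_contra hne
  have h1 := congrFun h i
  rw [flip_self, flip_ne _ hne] at h1
  rcases hv i with hh | hh <;> omega

def KT (n k : ℕ) : Type :=
  {q : (Fin n → Bool) × Finset (Fin n) // ¬ Even (negCount (toVec q.1)) ∧ q.2.card = k + 1}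

instance (n k : ℕ) : Fintype (KT n k) := Subtype.fintype _

def FK (n k : ℕ) (q : KT n k) : Set (Fin n → ℤ) := Kset (toVec q.1.1) q.1.2

lemma FK_inj {k : ℕ} (hk : 3 ≤ k) : Function.Injective (FK n k) := by
  rintro ⟨⟨g₁, S₁⟩, ho₁, hc₁⟩ ⟨⟨g₂, S₂⟩, ho₂, hc₂⟩ h
  simp only [FK] at h
  dsimp only at ho₁ hc₁ ho₂ hc₂
  have hv₁ := toVec_mem g₁
  have hv₂ := toVec_mem g₂
  have hveq : toVec g₁ = toVec g₂ := by
    by_contra hne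
    obtain ⟨j, hj⟩ : ∃ j, toVec g₁ j ≠ toVec g₂ j := by
      by_contra hall; push_neg at hall; exact hne (funext hall)
    obtain ⟨i₁, hi₁, i₂, hi₂, h12⟩ := (Finset.one_lt_card (s := S₁.erase j)).mp (by
      have h2 := Finset.pred_card_le_card_erase (a := j) (s := S₁)
      omega)
    have hi₁S := Finset.mem_of_mem_erase hi₁
    have hi₂S := Finset.mem_of_mem_erase hi₂
    have hi₁j := Finset.ne_of_mem_erase hi₁
    have hi₂j := Finset.ne_of_mem_erase hi₂
    have hm : ∀ i ∈ S₁, flip (toVec g₁) i ∈ Kset (toVec g₂) S₂ := fun i hi =>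
      h ▸ (mem_Kset_iff hv₁ ho₁).2 ⟨i, hi, rfl⟩
    obtain ⟨⟨hP1, _⟩, l₁, hl₁S, hl₁ne, hl₁ag⟩ := hm i₁ hi₁S
    obtain ⟨⟨hP2, _⟩, l₂, hl₂S, hl₂ne, hl₂ag⟩ := hm i₂ hi₂S
    have hlj₁ : l₁ = j := by
      by_contra hl
      have h1 := hl₁ag j (fun e => hl e.symm)
      rw [flip_ne _ (Ne.symm hi₁j)] at h1
      exact hj h1
    have hlj₂ : l₂ = j := by
      by_contra hl
      have h1 := hl₂ag j (fun e => hl e.symm)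
      rw [flip_ne _ (Ne.symm hi₂j)] at h1
      exact hj h1
    subst hlj₁; subst hlj₂
    have e1 : flip (toVec g₁) i₁ i₁ = toVec g₂ i₁ := hl₁ag i₁ hi₁j
    have e2 : flip (toVec g₁) i₂ i₁ = toVec g₂ i₁ := hl₂ag i₁ hi₁j
    rw [flip_self] at e1
    rw [flip_ne _ h12] at e2
    rcases hv₁ i₁ with hh | hh <;> omega
  have hg : g₁ = g₂ := toVec_inj hveq
  have hS : S₁ = S₂ := by
    ext i
    constructor
    · intro hi
      have hmem : flip (toVec g₁) i ∈ Kset (toVec g₂) S₂ :=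
        h ▸ (mem_Kset_iff hv₁ ho₁).2 ⟨i, hi, rfl⟩
      obtain ⟨l, hlS, hfl⟩ := (mem_Kset_iff hv₂ ho₂).1 hmem
      rw [hveq] at hfl
      exact (flip_index_eq hv₂ hfl) ▸ hlS
    · intro hi
      have hmem : flip (toVec g₂) i ∈ Kset (toVec g₁) S₁ :=
        h ▸ (mem_Kset_iff hv₂ ho₂).2 ⟨i, hi, rfl⟩
      obtain ⟨l, hlS, hfl⟩ := (mem_Kset_iff hv₁ ho₁).1 hmem
      rw [hveq] at hfl
      exact (flip_index_eq hv₂ hfl) ▸ hlS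
  exact Subtype.ext (by simp [hg, hS])

lemma range_FK (k : ℕ) :
    {X : Set (Fin n → ℤ) | ∃ v' ∈ PsiMinus n, ∃ S : Finset (Fin n),
        S.card = k + 1 ∧ X = Kset v' S} = Set.range (FK n k) := by
  ext X
  constructor
  · rintro ⟨v, hv, S, hSc, rfl⟩
    have hveq : toVec (fun i => decide (v i = -1)) = v := by
      funext i
      rcases hv.1 i with h | h <;> norm_num [toVec, h]
    exact ⟨⟨(fun i => decide (v i = -1), S), by rw [hveq]; exact hv.2, hSc⟩,
      by simp only [FK]; rw [hveq]⟩
  · rintro ⟨⟨⟨g, S⟩, ho, hc⟩, rfl⟩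
    exact ⟨toVec g, ⟨toVec_mem g, ho⟩, S, hc, rfl⟩

lemma card_odd (hn : 0 < n) :
    Fintype.card {g : Fin n → Bool // ¬ Even (negCount (toVec g))} = 2 ^ (n - 1) := by
  classical
  set i₀ : Fin n := ⟨0, hn⟩
  have key : (univ.filter fun g : Fin n → Bool => ¬ Even (negCount (toVec g))).card
      = (univ.filter fun g : Fin n → Bool => Even (negCount (toVec g))).card := by
    apply Finset.card_bij' (fun g _ => Function.update g i₀ (!(g i₀)))
      (fun g _ => Function.update g i₀ (!(g i₀)))
    · intro g _
      simp [Function.update_idem, Function.update_self, Bool.not_not, Function.update_eq_self]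
    · intro g _
      simp [Function.update_idem, Function.update_self, Bool.not_not, Function.update_eq_self]
    · intro g hg
      simp only [Finset.mem_filter, Finset.mem_univ, true_and] at hg ⊢
      rw [toVec_update, flip_parity _ (toVec_mem g)]
      exact hg
    · intro g hg
      simp only [Finset.mem_filter, Finset.mem_univ, true_and] at hg ⊢
      rw [toVec_update, flip_parity _ (toVec_mem g)]
      exact not_not_intro hg
  have htot := Finset.card_filter_add_card_filter_not
    (s := (univ : Finset (Fin n → Bool)))
    (p := fun g : Fin n → Bool => Even (negCount (toVec g)))
  have huniv : (univ : Finset (Fin n → Bool)).card = 2 ^ n := by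
    simp [Finset.card_univ]
  have h2 : (2 : ℕ) ^ n = 2 * 2 ^ (n - 1) := by
    conv_lhs => rw [show n = n - 1 + 1 from by omega]
    rw [pow_succ']
  rw [Fintype.card_subtype]
  omega

lemma card_KT (n k : ℕ) (hn : 0 < n) :
    Fintype.card (KT n k) = 2 ^ (n - 1) * n.choose (k + 1) := by
  have e : KT n k ≃ {g : Fin n → Bool // ¬ Even (negCount (toVec g))} ×
      {S : Finset (Fin n) // S.card = k + 1} :=
    { toFun := fun q => (⟨q.1.1, q.2.1⟩, ⟨q.1.2, q.2.2⟩)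
      invFun := fun q => ⟨(q.1.1, q.2.1), q.1.2, q.2.2⟩
      left_inv := fun q => rfl
      right_inv := fun q => rfl }
  rw [Fintype.card_congr e, Fintype.card_prod, card_odd hn, Fintype.card_finset_len,
    Fintype.card_fin]

end PartB
end Stmt15Aux

theorem stmt15 (n k : ℕ) (hn : 4 ≤ n) (h3 : 3 ≤ k) (hkn : k < n) :
    {X : Set (Fin n → ℤ) | ∃ v ∈ PsiPlus n, ∃ S : Finset (Fin n),
        S.card = k ∧ X = Lset v S}.ncard = 2 ^ (n - k) * n.choose k ∧
    {X : Set (Fin n → ℤ) | ∃ v' ∈ PsiMinus n, ∃ S : Finset (Fin n),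
        S.card = k + 1 ∧ X = Kset v' S}.ncard = 2 ^ (n - 1) * n.choose (k + 1) := by
  constructor
  · rw [Stmt15Aux.range_FL (by omega), ← Nat.card_coe_set_eq,
      Nat.card_range_of_injective (Stmt15Aux.FL_inj (by omega)),
      Nat.card_eq_fintype_card, Stmt15Aux.card_LT]
  · rw [Stmt15Aux.range_FK, ← Nat.card_coe_set_eq,
      Nat.card_range_of_injective (Stmt15Aux.FK_inj h3),
      Nat.card_eq_fintype_card, Stmt15Aux.card_KT n k (by omega)]
end

section
/- For n ≥ 4 and 3 ≤ k ≤ n, the alternating-sum identity ∑_{i=k}^{n} (-1)^{k+i} 2^{n-i} C(n,i) = ∑_{i=k}^{n} C(n,i)·C(i-1, k-1) holds. -/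
open Finset

lemma auxA (n k : ℕ) (h : k ≤ n) :
    ∑ i ∈ Finset.Icc k n, n.choose i * i.choose k = n.choose k * 2 ^ (n - k) := by
  have : Finset.Icc k n = Finset.Ico k (n + 1) := by
    rw [Finset.Ico_add_one_right_eq_Icc]
  rw [this, Finset.sum_Ico_eq_sum_range]
  have h1 : n + 1 - k = (n - k) + 1 := by omega
  rw [h1]
  have h2 : ∀ j ∈ Finset.range (n - k + 1),
      n.choose (k + j) * (k + j).choose k = n.choose k * (n - k).choose j := by
    intro j hj
    simp only [Finset.mem_range] at hj
    rw [Nat.choose_mul (by omega)]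
    simp
  rw [Finset.sum_congr rfl h2, ← Finset.mul_sum, Nat.sum_range_choose]

lemma step (n k : ℕ) (h1 : 1 ≤ k) (h : k < n) :
    (∑ i ∈ Finset.Icc k n, (n.choose i : ℤ) * ((i - 1).choose (k - 1)))
      + ∑ i ∈ Finset.Icc (k+1) n, (n.choose i : ℤ) * ((i - 1).choose k)
      = (n.choose k : ℤ) * 2 ^ (n - k) := by
  have hsplit : Finset.Icc k n = insert k (Finset.Icc (k+1) n) := by
    ext x; simp only [Finset.mem_Icc, Finset.mem_insert]; omega
  have hnm : k ∉ Finset.Icc (k+1) n := by simp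
  have key : ∑ i ∈ Finset.Icc (k+1) n, ((n.choose i : ℤ) * ((i - 1).choose (k - 1))
      + (n.choose i : ℤ) * ((i - 1).choose k))
      = ∑ i ∈ Finset.Icc (k+1) n, (n.choose i : ℤ) * (i.choose k) := by
    refine Finset.sum_congr rfl fun i hi => ?_
    simp only [Finset.mem_Icc] at hi
    rw [← mul_add]
    congr 1
    have : (i - 1).choose (k - 1) + (i - 1).choose k = i.choose k := by
      obtain ⟨j, rfl⟩ : ∃ j, i = j + 1 := ⟨i - 1, by omega⟩
      obtain ⟨l, rfl⟩ : ∃ l, k = l + 1 := ⟨k - 1, by omega⟩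
      simp [Nat.choose_succ_succ]
    exact_mod_cast congrArg (Nat.cast (R := ℤ)) this
  have hA : (∑ i ∈ Finset.Icc k n, (n.choose i : ℤ) * (i.choose k))
      = (n.choose k : ℤ) * 2 ^ (n - k) := by
    exact_mod_cast auxA n k h.le
  rw [hsplit, Finset.sum_insert hnm] at hA ⊢
  simp only [Nat.choose_self, Nat.cast_one, mul_one] at hA ⊢
  rw [add_assoc, ← Finset.sum_add_distrib, key]
  exact hA

lemma main (n : ℕ) : ∀ d k, 1 ≤ k → k + d = n →
    ∑ i ∈ Finset.Icc k n, (-1 : ℤ) ^ (k + i) * 2 ^ (n - i) * (n.choose i)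
      = ∑ i ∈ Finset.Icc k n, (n.choose i : ℤ) * ((i - 1).choose (k - 1)) := by
  intro d
  induction d with
  | zero =>
    intro k h1 hkn
    subst hkn
    simp [← two_mul, pow_mul]
  | succ d ih =>
    intro k h1 hkn
    have hk : k < n := by omega
    have IH := ih (k + 1) (by omega) (by omega)
    have hs := step n k h1 hk
    have hsplit : Finset.Icc k n = insert k (Finset.Icc (k+1) n) := by
      ext x; simp only [Finset.mem_Icc, Finset.mem_insert]; omega
    have hnm : k ∉ Finset.Icc (k+1) n := by simp
    rw [hsplit, Finset.sum_insert hnm, Finset.sum_insert hnm]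
    have hL : ∑ i ∈ Finset.Icc (k+1) n, (-1 : ℤ) ^ (k + i) * 2 ^ (n - i) * (n.choose i)
        = -∑ i ∈ Finset.Icc (k+1) n, (-1 : ℤ) ^ (k + 1 + i) * 2 ^ (n - i) * (n.choose i) := by
      rw [← Finset.sum_neg_distrib]
      refine Finset.sum_congr rfl fun i _ => ?_
      rw [show k + 1 + i = (k + i) + 1 by ring, pow_succ]
      ring
    rw [hL, IH]
    have hkk : (-1 : ℤ) ^ (k + k) = 1 := by
      rw [← two_mul, pow_mul]; norm_num
    rw [hkk]
    rw [hsplit, Finset.sum_insert hnm] at hs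
    simp only [Nat.add_sub_cancel, Nat.choose_self, Nat.cast_one, mul_one] at hs ⊢
    linarith [hs]

theorem stmt19 (n k : ℕ) (hn : 4 ≤ n) (h3 : 3 ≤ k) (hkn : k ≤ n) :
    ∑ i ∈ Finset.Icc k n, (-1 : ℤ) ^ (k + i) * 2 ^ (n - i) * (n.choose i)
      = ∑ i ∈ Finset.Icc k n, (n.choose i : ℤ) * ((i - 1).choose (k - 1)) := by
  exact main n (n - k) k (by omega) (by omega)
end
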